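/- arXiv:1902.10857 — 10 statements merged into one kernel-verified Lean document; each statement's English description precedes it below -/
import Mathlib

section
/- Every seminormalized weakly null sequence in an infinite-dimensional Banach space admits a subsequence that is an asymptotically monotone basic sequence, i.e., a basic subsequence whose partial-sum projections P_n satisfy ‖P_n‖ → 1. -/
open Filter Topology

noncomputable def sel (Q : Finset ℕ → ℕ → ℕ → Prop)
    (H : ∀ s k N, ∃ n, N < n ∧ Q s k n) : ℕ → ℕ
  | 0 => Classical.choose (H ∅ 0 0)
  | k + 1 => Classical.choose (H (Finset.image (fun i : Fin (k + 1) => sel Q H i.1) Finset.univ)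
      (k + 1) (sel Q H k))
  termination_by k => k
  decreasing_by all_goals first | apply Fin.is_lt | apply Nat.lt_succ_self

lemma sel_succ (Q : Finset ℕ → ℕ → ℕ → Prop) (H : ∀ s k N, ∃ n, N < n ∧ Q s k n) (k : ℕ) :
    sel Q H (k + 1) = Classical.choose (H (Finset.image (fun i : Fin (k + 1) => sel Q H i.1)
      Finset.univ) (k + 1) (sel Q H k)) := by
  rw [sel]

lemma sel_strictMono (Q : Finset ℕ → ℕ → ℕ → Prop) (H : ∀ s k N, ∃ n, N < n ∧ Q s k n) :
    StrictMono (sel Q H) := by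
  apply strictMono_nat_of_lt_succ
  intro k
  rw [sel_succ]
  exact (Classical.choose_spec (H _ _ _)).1

lemma sel_spec (Q : Finset ℕ → ℕ → ℕ → Prop) (H : ∀ s k N, ∃ n, N < n ∧ Q s k n) (m : ℕ) :
    Q ((Finset.range m).image (sel Q H)) m (sel Q H m) := by
  have himg : ∀ m, Finset.image (fun i : Fin m => sel Q H i.1) Finset.univ
      = (Finset.range m).image (sel Q H) := by
    intro m; ext x
    simp [Finset.mem_image, Finset.mem_range, Fin.exists_iff]
  cases m with
  | zero =>
    simp only [Finset.range_zero, Finset.image_empty]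
    have := (Classical.choose_spec (H ∅ 0 0)).2
    rw [sel]; exact this
  | succ k =>
    rw [← himg, sel_succ]
    exact (Classical.choose_spec (H _ _ _)).2
lemma step_lemma {X : Type*} [NormedAddCommGroup X] [NormedSpace ℝ X]
    (y : ℕ → X) (A : ℝ) (hA : 0 < A) (hbd : ∀ n, A ≤ ‖y n‖)
    (hweak : ∀ f : X →L[ℝ] ℝ, Tendsto (fun n => f (y n)) atTop (𝓝 0))
    (F : Submodule ℝ X) (hF : FiniteDimensional ℝ F) (ε : ℝ) (hε : 0 < ε) (N : ℕ) :
    ∃ n, N < n ∧ ∀ x ∈ F, ∀ a : ℝ, ‖x‖ ≤ (1 + ε) * ‖x + a • y n‖ := by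
  set c : ℝ := (1 + ε)⁻¹ with hc
  have h1ε : (0:ℝ) < 1 + ε := by linarith
  have hc0 : 0 < c := inv_pos.mpr h1ε
  have hc1 : c < 1 := by
    rw [hc, inv_lt_one_iff₀]; right; linarith
  have hAden : (0:ℝ) < 1 + 2 / A := by positivity
  set δ : ℝ := (1 - c) / (1 + 2 / A) with hδdef
  have hδ : 0 < δ := by
    apply div_pos; linarith; exact hAden
  have hδc : δ * (1 + 2 / A) = 1 - c := by
    rw [hδdef]; exact div_mul_cancel₀ _ (ne_of_gt hAden)
  -- compact "sphere" of F inside X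
  haveI := hF
  haveI : ProperSpace F := FiniteDimensional.proper ℝ F
  have hcomp : IsCompact ((Subtype.val : F → X) '' Metric.sphere (0 : F) 1) :=
    (isCompact_sphere (0 : F) 1).image continuous_subtype_val
  obtain ⟨t, hts, htf, htcov⟩ :=
    Metric.finite_approx_of_totallyBounded hcomp.totallyBounded δ hδ
  -- norming functionals
  have hnorm1 : ∀ z ∈ t, ‖z‖ = 1 := by
    intro z hz
    obtain ⟨w, hw, rfl⟩ := hts hz
    simpa using Metric.mem_sphere.mp hw
  have hgex : ∀ z : X, ∃ g : X →L[ℝ] ℝ, z ∈ t → (‖g‖ = 1 ∧ g z = ‖z‖) := by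
    intro z
    by_cases hz : z ∈ t
    · have hz0 : z ≠ 0 := by
        intro h; have := hnorm1 z hz; rw [h] at this; simp at this
      obtain ⟨g, hg1, hg2⟩ := exists_dual_vector ℝ z (norm_ne_zero_iff.mpr hz0)
      exact ⟨g, fun _ => ⟨hg1, by simpa using hg2⟩⟩
    · exact ⟨0, fun h => absurd h hz⟩
  choose g hg using hgex
  -- choose n
  have hev : ∀ᶠ n in atTop, ∀ z ∈ t, |g z (y n)| < δ := by
    rw [eventually_all_finite htf]
    intro z hz
    have := hweak (g z)
    have h2 : ∀ᶠ v in 𝓝 (0:ℝ), |v| < δ := by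
      have : Metric.ball (0:ℝ) δ ∈ 𝓝 (0:ℝ) := Metric.ball_mem_nhds 0 hδ
      filter_upwards [this] with v hv
      simpa [Real.dist_eq] using hv
    exact this.eventually h2
  obtain ⟨n, hn1, hn2⟩ := (hev.and (eventually_gt_atTop N)).exists
  refine ⟨n, hn2, ?_⟩
  -- main estimate for unit vectors
  have key : ∀ u : X, u ∈ F → ‖u‖ = 1 → ∀ a : ℝ, c ≤ ‖u + a • y n‖ := by
    intro u huF hu1 a
    rcases le_or_gt (2 / A) |a| with ha | ha
    · -- large coefficient
      have h2 : (2:ℝ) ≤ |a| * ‖y n‖ := by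
        calc (2:ℝ) = (2 / A) * A := by field_simp
        _ ≤ |a| * ‖y n‖ :=
          mul_le_mul ha (hbd n) (le_of_lt hA) (abs_nonneg a)
      have h3 : ‖a • y n‖ ≤ ‖u + a • y n‖ + ‖u‖ := by
        calc ‖a • y n‖ = ‖(u + a • y n) - u‖ := by congr 1; abel
        _ ≤ ‖u + a • y n‖ + ‖u‖ := norm_sub_le _ _
      rw [norm_smul, Real.norm_eq_abs] at h3
      have : (1:ℝ) ≤ ‖u + a • y n‖ := by
        rw [hu1] at h3; linarith
      linarith
    · -- small coefficient: use the net
      have huS : u ∈ (Subtype.val : F → X) '' Metric.sphere (0 : F) 1 := by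
        refine ⟨⟨u, huF⟩, ?_, rfl⟩
        simpa [Metric.mem_sphere] using hu1
      obtain ⟨z, hzt, hz⟩ := Set.mem_iUnion₂.mp (htcov huS)
      have hdz : ‖u - z‖ < δ := by
        simpa [dist_eq_norm] using hz
      obtain ⟨hg1, hg2⟩ := hg z hzt
      have hb1 : |g z (u - z)| ≤ δ := by
        calc |g z (u - z)| ≤ ‖g z‖ * ‖u - z‖ := (g z).le_opNorm _
        _ ≤ δ := by rw [hg1]; linarith
      have hb2 : |a * g z (y n)| ≤ (2 / A) * δ := by
        rw [abs_mul]
        exact mul_le_mul (le_of_lt ha) (le_of_lt (hn1 z hzt)) (abs_nonneg _)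
          (by positivity)
      have hval : g z (u + a • y n) = g z z + g z (u - z) + a * g z (y n) := by
        have huz : u + a • y n = z + (u - z) + a • y n := by abel
        rw [huz, map_add, map_add, map_smul, smul_eq_mul]
      have hlow : c ≤ g z (u + a • y n) := by
        rw [hval, hg2, hnorm1 z hzt]
        have e1 : -δ ≤ g z (u - z) := neg_le_of_abs_le hb1
        have e2 : -((2 / A) * δ) ≤ a * g z (y n) := neg_le_of_abs_le hb2
        nlinarith [hδc]
      calc c ≤ g z (u + a • y n) := hlow
      _ ≤ |g z (u + a • y n)| := le_abs_self _
      _ ≤ ‖g z‖ * ‖u + a • y n‖ := (g z).le_opNorm _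
      _ = ‖u + a • y n‖ := by rw [hg1, one_mul]
  -- general x
  intro x hxF a
  by_cases hx : x = 0
  · subst hx; simp; positivity
  · have hxn : (0:ℝ) < ‖x‖ := norm_pos_iff.mpr hx
    set u : X := ‖x‖⁻¹ • x with hu
    have huF : u ∈ F := F.smul_mem _ hxF
    have hu1 : ‖u‖ = 1 := by
      rw [hu, norm_smul, norm_inv, norm_norm, inv_mul_cancel₀ (ne_of_gt hxn)]
    have hk := key u huF hu1 (‖x‖⁻¹ * a)
    have hrw : x + a • y n = ‖x‖ • (u + (‖x‖⁻¹ * a) • y n) := by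
      rw [hu, smul_add, smul_smul, smul_smul]
      rw [mul_inv_cancel₀ (ne_of_gt hxn), one_smul]
      congr 1
      rw [← mul_assoc, mul_inv_cancel₀ (ne_of_gt hxn), one_mul]
    have hnormeq : ‖x + a • y n‖ = ‖x‖ * ‖u + (‖x‖⁻¹ * a) • y n‖ := by
      rw [hrw, norm_smul, norm_norm]
    have : c * ‖x‖ ≤ ‖x + a • y n‖ := by
      rw [hnormeq]
      calc c * ‖x‖ = ‖x‖ * c := mul_comm _ _
      _ ≤ ‖x‖ * ‖u + (‖x‖⁻¹ * a) • y n‖ :=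
        mul_le_mul_of_nonneg_left hk (le_of_lt hxn)
    calc ‖x‖ = (1 + ε) * (c * ‖x‖) := by
          rw [hc]; field_simp
    _ ≤ (1 + ε) * ‖x + a • y n‖ := mul_le_mul_of_nonneg_left this (le_of_lt h1ε)
/-- Every seminormalized weakly null sequence in an infinite-dimensional
Banach space admits a subsequence that is an asymptotically monotone basic sequence:
there are constants `C k` bounding the partial-sum projections, with `C k → 1`. -/
theorem seminormalized_weakly_null_asymptotically_monotone_subseq
    {X : Type*} [NormedAddCommGroup X] [NormedSpace ℝ X] [CompleteSpace X]
    (hinf : ¬ FiniteDimensional ℝ X)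
    (y : ℕ → X) (A B : ℝ) (hA : 0 < A)
    (hbd : ∀ n, A ≤ ‖y n‖ ∧ ‖y n‖ ≤ B)
    (hweak : ∀ f : X →L[ℝ] ℝ, Tendsto (fun n => f (y n)) atTop (𝓝 0)) :
    ∃ φ : ℕ → ℕ, StrictMono φ ∧ ∃ C : ℕ → ℝ,
      (∀ k n, k ≤ n → ∀ a : ℕ → ℝ,
        ‖∑ i ∈ Finset.range k, a i • y (φ i)‖ ≤
          C k * ‖∑ i ∈ Finset.range n, a i • y (φ i)‖) ∧
      Tendsto C atTop (𝓝 1) := by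
  set b : ℕ → ℝ := fun k => 1 + (1/2 : ℝ)^k with hbdef
  have hb1 : ∀ k, 1 ≤ b k := fun k => by
    have : (0:ℝ) < (1/2:ℝ)^k := by positivity
    simp only [hbdef]; linarith
  have hbpos : ∀ k, (0:ℝ) < b k := fun k => lt_of_lt_of_le one_pos (hb1 k)
  have hbdec : ∀ k, b (k+1) < b k := fun k => by
    have h1 : ((1:ℝ)/2)^(k+1) < (1/2)^k := by
      rw [pow_succ]
      have : (0:ℝ) < (1/2:ℝ)^k := by positivity
      nlinarith
    simp only [hbdef]; linarith
  have hratio : ∀ k, (0:ℝ) < b k / b (k+1) - 1 := fun k => by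
    have := (one_lt_div (hbpos (k+1))).mpr (hbdec k)
    linarith
  set Q : Finset ℕ → ℕ → ℕ → Prop := fun s k n =>
    ∀ x ∈ Submodule.span ℝ (y '' (s : Set ℕ)), ∀ a : ℝ,
      ‖x‖ ≤ (b k / b (k+1)) * ‖x + a • y n‖ with hQdef
  have H : ∀ s k N, ∃ n, N < n ∧ Q s k n := by
    intro s k N
    obtain ⟨n, hn1, hn2⟩ := step_lemma y A hA (fun n => (hbd n).1) hweak
      (Submodule.span ℝ (y '' (s : Set ℕ)))
      (FiniteDimensional.span_of_finite ℝ (s.finite_toSet.image y))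
      (b k / b (k+1) - 1) (hratio k) N
    refine ⟨n, hn1, ?_⟩
    intro x hx a
    have := hn2 x hx a
    have he : 1 + (b k / b (k+1) - 1) = b k / b (k+1) := by ring
    rwa [he] at this
  set φ : ℕ → ℕ := sel Q H with hφdef
  refine ⟨φ, sel_strictMono Q H, b, ?_, ?_⟩
  · -- projection bounds
    have key : ∀ n k, k ≤ n → ∀ a : ℕ → ℝ,
        ‖∑ i ∈ Finset.range k, a i • y (φ i)‖ ≤
          (b k / b n) * ‖∑ i ∈ Finset.range n, a i • y (φ i)‖ := by
      intro n
      induction n with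
      | zero =>
        intro k hk a
        interval_cases k
        simp
      | succ n ih =>
        intro k hk a
        rcases Nat.lt_succ_iff_lt_or_eq.mp (Nat.lt_succ_of_le hk) with hk' | rfl
        · have h1 := ih k (Nat.lt_succ_iff.mp hk') a
          have hspec := sel_spec Q H n
          have hx : (∑ i ∈ Finset.range n, a i • y (φ i)) ∈
              Submodule.span ℝ (y '' (((Finset.range n).image (sel Q H) : Finset ℕ) : Set ℕ)) := by
            apply Submodule.sum_mem
            intro i hi
            apply Submodule.smul_mem
            apply Submodule.subset_span
            apply Set.mem_image_of_mem y
            simp only [Finset.coe_image, Set.mem_image, Finset.mem_coe, Finset.mem_range]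
            exact ⟨i, Finset.mem_range.mp hi, rfl⟩
          have h2 := hspec _ hx (a n)
          rw [show (∑ i ∈ Finset.range n, a i • y (φ i)) + a n • y (sel Q H n)
              = ∑ i ∈ Finset.range (n+1), a i • y (φ i) by
            rw [Finset.sum_range_succ]] at h2
          have hbk0 : (0:ℝ) ≤ b k / b n := le_of_lt (div_pos (hbpos k) (hbpos n))
          calc ‖∑ i ∈ Finset.range k, a i • y (φ i)‖
              ≤ (b k / b n) * ‖∑ i ∈ Finset.range n, a i • y (φ i)‖ := h1
            _ ≤ (b k / b n) * ((b n / b (n+1)) * ‖∑ i ∈ Finset.range (n+1), a i • y (φ i)‖) :=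
              mul_le_mul_of_nonneg_left h2 hbk0
            _ = (b k / b (n+1)) * ‖∑ i ∈ Finset.range (n+1), a i • y (φ i)‖ := by
              rw [← mul_assoc, div_mul_div_cancel₀ (hbpos n).ne']
        · have he : b (n+1) / b (n+1) = 1 := div_self (ne_of_gt (hbpos (n+1)))
          rw [he, one_mul]
    intro k n hkn a
    have h1 := key n k hkn a
    have h2 : b k / b n ≤ b k := by
      apply div_le_self (le_of_lt (hbpos k)) (hb1 n)
    calc ‖∑ i ∈ Finset.range k, a i • y (φ i)‖
        ≤ (b k / b n) * ‖∑ i ∈ Finset.range n, a i • y (φ i)‖ := h1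
      _ ≤ b k * ‖∑ i ∈ Finset.range n, a i • y (φ i)‖ :=
        mul_le_mul_of_nonneg_right h2 (norm_nonneg _)
  · have h0 : Tendsto (fun k => ((1:ℝ)/2)^k) atTop (𝓝 0) :=
      tendsto_pow_atTop_nhds_zero_of_lt_one (by norm_num) (by norm_num)
    have h1 := tendsto_const_nhds.add h0 (f := fun _ : ℕ => (1:ℝ))
    have : Tendsto (fun k : ℕ => 1 + ((1:ℝ)/2)^k) atTop (𝓝 (1 + 0)) := h1
    rw [add_zero] at this
    exact this
end

section
/- (Pełczyński selection principle) For every ε ∈ (0,1), every normalized weakly null sequence in an infinite-dimensional Banach space has a basic subsequence with basic constant at most 1 + ε. -/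
open Filter Topology

/-- A finite product of `1 - f j` is at least `1 - ∑ f j`. -/
lemma aux_prod_one_sub_ge (s : Finset ℕ) (f : ℕ → ℝ) (h0 : ∀ j, 0 ≤ f j)
    (h1 : ∀ j, f j ≤ 1) : 1 - ∑ j ∈ s, f j ≤ ∏ j ∈ s, (1 - f j) := by
  classical
  induction s using Finset.induction_on with
  | empty => simp
  | insert _ _ hnot ih =>
    rename_i a s
    rw [Finset.sum_insert hnot, Finset.prod_insert hnot]
    have hs0 : 0 ≤ ∑ j ∈ s, f j := Finset.sum_nonneg fun j _ => h0 j
    have key : (1 - f a) * (1 - ∑ j ∈ s, f j) ≤ (1 - f a) * ∏ j ∈ s, (1 - f j) :=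
      mul_le_mul_of_nonneg_left ih (by linarith [h1 a])
    nlinarith [h0 a]

/-- Mazur-type lemma: given a finite-dimensional subspace `E` and `δ > 0`, a normalized
weakly null sequence has a term `y k` with `k ≥ N` that is `δ`-orthogonal to `E`. -/
lemma aux_net_lemma {X : Type*} [NormedAddCommGroup X] [NormedSpace ℝ X]
    (y : ℕ → X) (hnorm : ∀ n, ‖y n‖ = 1)
    (hweak : ∀ f : X →L[ℝ] ℝ, Tendsto (fun n => f (y n)) atTop (𝓝 0))
    (E : Submodule ℝ X) [FiniteDimensional ℝ E]
    (δ : ℝ) (hδ : 0 < δ) (hδ1 : δ ≤ 1) (N : ℕ) :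
    ∃ k, N ≤ k ∧ ∀ x ∈ E, ∀ a : ℝ, (1 - δ) * ‖x‖ ≤ ‖x + a • y k‖ := by
  classical
  have hδ4 : (0:ℝ) < δ / 4 := by linarith
  -- compact sphere of E
  have hcomp : IsCompact (Metric.sphere (0 : E) 1) := isCompact_sphere 0 1
  obtain ⟨t, hts, htfin, htcov⟩ := hcomp.finite_cover_balls hδ4
  -- norming functionals
  have hφ : ∀ c : E, (c : X) ≠ 0 → ∃ g : X →L[ℝ] ℝ, ‖g‖ = 1 ∧ g c = ‖(c : X)‖ :=
    fun c hc => exists_dual_vector ℝ (c : X) (norm_ne_zero_iff.2 hc)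
  let F : E → (X →L[ℝ] ℝ) := fun c =>
    if h : (c : X) = 0 then 0 else (hφ c h).choose
  have hF1 : ∀ c : E, (c : X) ≠ 0 → ‖F c‖ = 1 := by
    intro c hc; simp only [F, dif_neg hc]; exact (hφ c hc).choose_spec.1
  have hF2 : ∀ c : E, (c : X) ≠ 0 → F c (c : X) = ‖(c : X)‖ := by
    intro c hc; simp only [F, dif_neg hc]; exact (hφ c hc).choose_spec.2
  -- choose k large
  have hev : ∀ᶠ k in atTop, (N ≤ k ∧ ∀ c ∈ t, |F c (y k)| < δ / 4) := by
    refine (eventually_ge_atTop N).and ?_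
    rw [eventually_all_finite htfin]
    intro c _
    have := (hweak (F c)).eventually (eventually_abs_sub_lt 0 hδ4)
    simpa using this
  obtain ⟨k, hkN, hk⟩ := hev.exists
  refine ⟨k, hkN, ?_⟩
  -- the unit-vector case
  have unit : ∀ u : X, ∀ hu : u ∈ E, ‖u‖ = 1 → ∀ b : ℝ, 1 - δ ≤ ‖u + b • y k‖ := by
    intro u hu hu1 b
    set U : E := ⟨u, hu⟩ with hU
    have hUs : U ∈ Metric.sphere (0 : E) 1 :=
      mem_sphere_zero_iff_norm.2 (by rw [Submodule.coe_norm]; exact hu1)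
    obtain ⟨c, hct, hcd⟩ := Set.mem_iUnion₂.1 (htcov hUs)
    have hcs : c ∈ Metric.sphere (0 : E) 1 := hts hct
    have hcn1 : ‖(c : X)‖ = 1 := by
      have := mem_sphere_zero_iff_norm.1 hcs
      rwa [Submodule.coe_norm] at this
    have hcne : (c : X) ≠ 0 := by
      intro h; rw [h] at hcn1; simp at hcn1
    have hdist : ‖u - (c : X)‖ < δ / 4 := by
      have h := Metric.mem_ball.1 hcd
      rw [dist_eq_norm] at h
      rw [← Submodule.norm_coe (U - c)] at h
      simpa using h
    by_cases hb : |b| ≤ 2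
    · -- use the norming functional at c
      have hfyk : |F c (y k)| < δ / 4 := hk c hct
      have hfn : ‖F c‖ = 1 := hF1 c hcne
      have hfc : F c (c : X) = 1 := by rw [hF2 c hcne, hcn1]
      have hfuc : |F c (u - (c : X))| ≤ δ / 4 := by
        have := (F c).le_opNorm (u - (c : X))
        rw [hfn, one_mul] at this
        calc |F c (u - (c:X))| = ‖F c (u - (c:X))‖ := (Real.norm_eq_abs _).symm
          _ ≤ ‖u - (c:X)‖ := this
          _ ≤ δ / 4 := le_of_lt hdist
      have hval : F c (u + b • y k) = 1 + F c (u - (c : X)) + b * F c (y k) := by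
        have : u + b • y k = (c : X) + (u - (c : X)) + b • y k := by abel
        rw [this, map_add, map_add, map_smul, hfc, smul_eq_mul]
      have hbound : ‖F c (u + b • y k)‖ ≤ ‖u + b • y k‖ := by
        have := (F c).le_opNorm (u + b • y k)
        rwa [hfn, one_mul] at this
      rw [Real.norm_eq_abs] at hbound
      have habs : |b * F c (y k)| ≤ 2 * (δ / 4) := by
        rw [abs_mul]
        exact mul_le_mul hb (le_of_lt hfyk) (abs_nonneg _) (by norm_num)
      have h1 : 1 - δ ≤ F c (u + b • y k) := by
        rw [hval]
        have h2 := abs_le.1 hfuc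
        have h3 := abs_le.1 habs
        linarith
      calc 1 - δ ≤ F c (u + b • y k) := h1
        _ ≤ |F c (u + b • y k)| := le_abs_self _
        _ ≤ ‖u + b • y k‖ := hbound
    · -- |b| > 2 : norm is at least |b| - 1 ≥ 1
      push_neg at hb
      have h1 : ‖b • y k‖ - ‖-u‖ ≤ ‖b • y k - -u‖ := norm_sub_norm_le _ _
      have h2 : b • y k - -u = u + b • y k := by abel
      rw [h2, norm_neg, hu1, norm_smul, hnorm k, Real.norm_eq_abs, mul_one] at h1
      linarith
  -- general case by homogeneity
  intro x hx a
  rcases eq_or_ne x 0 with rfl | hx0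
  · simpa using norm_nonneg (a • y k)
  have hxn : 0 < ‖x‖ := norm_pos_iff.2 hx0
  set u : X := ‖x‖⁻¹ • x with hu
  have huE : u ∈ E := E.smul_mem _ hx
  have hun : ‖u‖ = 1 := by
    rw [hu, norm_smul, norm_inv, norm_norm, inv_mul_cancel₀ (ne_of_gt hxn)]
  have key := unit u huE hun (‖x‖⁻¹ * a)
  have heq : x + a • y k = ‖x‖ • (u + (‖x‖⁻¹ * a) • y k) := by
    rw [smul_add, hu, smul_smul, smul_smul, mul_inv_cancel₀ (ne_of_gt hxn),
      one_smul, ← mul_assoc, mul_inv_cancel₀ (ne_of_gt hxn), one_mul]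
  rw [heq, norm_smul, norm_norm]
  calc (1 - δ) * ‖x‖ = ‖x‖ * (1 - δ) := mul_comm _ _
    _ ≤ ‖x‖ * ‖u + (‖x‖⁻¹ * a) • y k‖ := mul_le_mul_of_nonneg_left key (norm_nonneg x)

/-- Pełczyński selection principle. For every `ε ∈ (0,1)`, every
normalized weakly null sequence in an infinite-dimensional Banach space has a basic
subsequence with basic constant at most `1 + ε`. -/
theorem pelczynski_selection_principle
    {X : Type*} [NormedAddCommGroup X] [NormedSpace ℝ X] [CompleteSpace X]
    (hinf : ¬ FiniteDimensional ℝ X)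
    (ε : ℝ) (hε : ε ∈ Set.Ioo (0 : ℝ) 1)
    (y : ℕ → X) (hnorm : ∀ n, ‖y n‖ = 1)
    (hweak : ∀ f : X →L[ℝ] ℝ, Tendsto (fun n => f (y n)) atTop (𝓝 0)) :
    ∃ φ : ℕ → ℕ, StrictMono φ ∧ ∀ m n, m ≤ n → ∀ a : ℕ → ℝ,
      ‖∑ i ∈ Finset.range m, a i • y (φ i)‖ ≤
        (1 + ε) * ‖∑ i ∈ Finset.range n, a i • y (φ i)‖ := by
  classical
  obtain ⟨hε0, hε1⟩ := hε
  set t : ℝ := ε / (1 + ε) with ht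
  have h1ε : (0:ℝ) < 1 + ε := by linarith
  have ht0 : 0 < t := div_pos hε0 h1ε
  have ht1 : t < 1 := by
    rw [ht, div_lt_one h1ε]; linarith
  set δ : ℕ → ℝ := fun m => t * (1/2 : ℝ) ^ (m + 1) with hδdef
  have hδ0 : ∀ m, 0 < δ m := fun m => by positivity
  have hδle : ∀ m, δ m ≤ t := by
    intro m
    have h2 : ((1:ℝ)/2) ^ (m+1) ≤ 1 := pow_le_one₀ (by norm_num) (by norm_num)
    calc δ m = t * (1/2)^(m+1) := rfl
      _ ≤ t * 1 := mul_le_mul_of_nonneg_left h2 (le_of_lt ht0)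
      _ = t := mul_one t
  have hδ1 : ∀ m, δ m ≤ 1 := fun m => le_trans (hδle m) (le_of_lt ht1)
  -- the selection step
  have key : ∀ (m : ℕ) (s : Finset ℕ), ∃ k, (∀ j ∈ s, j < k) ∧
      ∀ x ∈ Submodule.span ℝ (y '' ↑s), ∀ a : ℝ, (1 - δ m) * ‖x‖ ≤ ‖x + a • y k‖ := by
    intro m s
    haveI : FiniteDimensional ℝ (Submodule.span ℝ (y '' ↑s)) :=
      FiniteDimensional.span_of_finite ℝ (s.finite_toSet.image y)
    obtain ⟨k, hk1, hk2⟩ := aux_net_lemma y hnorm hweak (Submodule.span ℝ (y '' ↑s))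
      (δ m) (hδ0 m) (hδ1 m) (s.sup id + 1)
    refine ⟨k, fun j hj => ?_, hk2⟩
    have : j ≤ s.sup id := Finset.le_sup (f := id) hj
    omega
  choose step hstep1 hstep2 using key
  -- define the chosen index sets recursively
  let S : ℕ → Finset ℕ := fun m => Nat.rec ∅ (fun m s => insert (step m s) s) m
  let φ : ℕ → ℕ := fun m => step m (S m)
  have hSsucc : ∀ m, S (m + 1) = insert (φ m) (S m) := fun m => rfl
  have hSimg : ∀ m, S m = Finset.image φ (Finset.range m) := by
    intro m
    induction m with
    | zero => rfl
    | succ m ih =>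
      rw [hSsucc, ih, Finset.range_add_one, Finset.image_insert]
  have hmono : StrictMono φ := by
    apply strictMono_nat_of_lt_succ
    intro m
    have hmem : φ m ∈ S (m + 1) := by rw [hSsucc]; exact Finset.mem_insert_self _ _
    exact hstep1 (m + 1) (S (m + 1)) (φ m) hmem
  refine ⟨φ, hmono, ?_⟩
  intro m n hmn a
  set g : ℕ → ℝ := fun n => ‖∑ i ∈ Finset.range n, a i • y (φ i)‖ with hg
  -- one-step inequality
  have hstep : ∀ n, (1 - δ n) * g n ≤ g (n + 1) := by
    intro n
    have := hstep2 n (S n) (∑ i ∈ Finset.range n, a i • y (φ i)) (by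
      apply Submodule.sum_mem
      intro i hi
      apply Submodule.smul_mem
      apply Submodule.subset_span
      refine ⟨φ i, ?_, rfl⟩
      rw [hSimg n]
      exact Finset.mem_coe.2 (Finset.mem_image_of_mem φ hi)) (a n)
    rw [hg]
    simp only [Finset.sum_range_succ]
    exact this
  -- telescoping
  have htel : ∀ m n, m ≤ n → (∏ j ∈ Finset.Ico m n, (1 - δ j)) * g m ≤ g n := by
    intro m n hmn
    induction n, hmn using Nat.le_induction with
    | base => simp
    | succ n hmn ih =>
      rw [Finset.prod_Ico_succ_top hmn]
      have h1 : (1 - δ n) ≥ 0 := by linarith [hδ1 n]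
      calc (∏ j ∈ Finset.Ico m n, (1 - δ j)) * (1 - δ n) * g m
          = (1 - δ n) * ((∏ j ∈ Finset.Ico m n, (1 - δ j)) * g m) := by ring
        _ ≤ (1 - δ n) * g n := mul_le_mul_of_nonneg_left ih h1
        _ ≤ g (n + 1) := hstep n
  -- lower bound on the product
  have hsum : ∀ n, ∑ j ∈ Finset.range n, δ j ≤ t := by
    intro n
    have hgeom : ∀ n : ℕ, ∑ j ∈ Finset.range n, ((1:ℝ)/2) ^ (j+1) = 1 - (1/2)^n := by
      intro n
      induction n with
      | zero => simp
      | succ n ih =>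
        rw [Finset.sum_range_succ, ih, pow_succ]
        ring
    calc ∑ j ∈ Finset.range n, δ j = t * ∑ j ∈ Finset.range n, ((1:ℝ)/2)^(j+1) := by
          rw [Finset.mul_sum]
      _ = t * (1 - (1/2)^n) := by rw [hgeom]
      _ ≤ t * 1 := by
          have hp : ((1:ℝ)/2)^n ≤ 1 := pow_le_one₀ (by norm_num) (by norm_num)
          have hp0 : (0:ℝ) ≤ (1/2:ℝ)^n := by positivity
          apply mul_le_mul_of_nonneg_left _ (le_of_lt ht0)
          linarith
      _ = t := mul_one t
  have hprod : 1 - t ≤ ∏ j ∈ Finset.Ico m n, (1 - δ j) := by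
    have h1 : ∑ j ∈ Finset.Ico m n, δ j ≤ ∑ j ∈ Finset.range n, δ j := by
      apply Finset.sum_le_sum_of_subset_of_nonneg
      · intro j hj
        rw [Finset.mem_range]; exact (Finset.mem_Ico.1 hj).2
      · intro j _ _; exact le_of_lt (hδ0 j)
    have h2 := aux_prod_one_sub_ge (Finset.Ico m n) δ (fun j => le_of_lt (hδ0 j)) hδ1
    linarith [hsum n]
  -- conclude
  have hfinal : (1 - t) * g m ≤ g n := by
    calc (1 - t) * g m ≤ (∏ j ∈ Finset.Ico m n, (1 - δ j)) * g m :=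
          mul_le_mul_of_nonneg_right hprod (norm_nonneg _)
      _ ≤ g n := htel m n hmn
  have h1t : 1 - t = 1 / (1 + ε) := by
    rw [ht]; field_simp; ring
  have : g m ≤ (1 + ε) * g n := by
    rw [h1t] at hfinal
    have := mul_le_mul_of_nonneg_left hfinal (le_of_lt h1ε)
    calc g m = (1 + ε) * (1 / (1 + ε) * g m) := by field_simp
      _ ≤ (1 + ε) * g n := this
  exact this
end

section
/- Let X be a Banach space with a subspace Y carrying a biorthogonal system {x_i; f_i}_{i=1}^∞ (with f_i ∈ Y*) such that, for some ε ∈ (0,1), ‖x_i‖ ≤ 1 + ε for all i and sup_{i≠j}(|f_i(y)| + |f_j(y)|) ≤ (1 + ε)‖y‖ for all y ∈ Y. Then X admits an equivalent norm |||·||| with (1+ε)^{-2}‖x‖ ≤ |||x||| ≤ (1+ε)‖x‖ for all x ∈ X, whose unit sphere contains a sequence (u_n) with ‖u_n ± u_m‖ ≥ 2 (in the new norm) for all n ≠ m. -/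
open Filter Topology

/-- A biorthogonal system `{x_i; f_i}` on a subspace `Y` with
`‖x_i‖ ≤ 1 + ε` and `|f_i(y)| + |f_j(y)| ≤ (1+ε)‖y‖` (for `i ≠ j`) yields an equivalent
norm `N` on `X` with `(1+ε)⁻² ‖z‖ ≤ N z ≤ (1+ε) ‖z‖` whose unit sphere contains a
symmetrically 2-separated sequence. -/
theorem biorthogonal_renorming_symmetrically_two_separated
    {X : Type*} [NormedAddCommGroup X] [NormedSpace ℝ X] [CompleteSpace X]
    (Y : Submodule ℝ X) (x : ℕ → Y) (f : ℕ → Y →L[ℝ] ℝ)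
    (hbi : ∀ i j, f i (x j) = if i = j then 1 else 0)
    (ε : ℝ) (hε : ε ∈ Set.Ioo (0 : ℝ) 1)
    (hx : ∀ i, ‖(x i : X)‖ ≤ 1 + ε)
    (hf : ∀ i j, i ≠ j → ∀ y : Y, |f i y| + |f j y| ≤ (1 + ε) * ‖y‖) :
    ∃ N : Seminorm ℝ X,
      (∀ z : X, ((1 + ε) ^ 2)⁻¹ * ‖z‖ ≤ N z ∧ N z ≤ (1 + ε) * ‖z‖) ∧
      ∃ u : ℕ → X, (∀ n, N (u n) = 1) ∧
        ∀ n m, n ≠ m → 2 ≤ N (u n + u m) ∧ 2 ≤ N (u n - u m) := by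
  obtain ⟨hε0, hε1⟩ := hε
  have h1ε : (0:ℝ) < 1 + ε := by linarith
  set s : Bool → ℝ := fun b => if b then 1 else -1 with hs
  have habs : ∀ b, |s b| = 1 := by intro b; cases b <;> simp [hs]
  set F : ℕ × ℕ × Bool × Bool → (Y →L[ℝ] ℝ) :=
    fun p => if p.1 = p.2.1 then 0 else s p.2.2.1 • f p.1 + s p.2.2.2 • f p.2.1 with hF
  have hFb : ∀ p, ∀ y : Y, |F p y| ≤ (1 + ε) * ‖y‖ := by
    rintro ⟨i, j, a, b⟩ y
    by_cases hij : i = j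
    · simp only [hF, if_pos hij, ContinuousLinearMap.zero_apply, abs_zero]
      positivity
    · simp only [hF, if_neg hij, ContinuousLinearMap.add_apply,
        ContinuousLinearMap.smul_apply, smul_eq_mul]
      calc |s a * f i y + s b * f j y| ≤ |s a * f i y| + |s b * f j y| := abs_add_le _ _
        _ = |f i y| + |f j y| := by rw [abs_mul, abs_mul, habs a, habs b, one_mul, one_mul]
        _ ≤ (1 + ε) * ‖y‖ := hf i j hij y
  have hFnorm : ∀ p, ‖F p‖ ≤ 1 + ε := fun p =>
    ContinuousLinearMap.opNorm_le_bound _ h1ε.le (fun y => hFb p y)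
  choose g hg hgnorm using fun p => exists_extension_norm_eq Y (F p)
  have hgb : ∀ p, ∀ z : X, |g p z| ≤ (1 + ε) * ‖z‖ := by
    intro p z
    calc |g p z| = ‖g p z‖ := (Real.norm_eq_abs _).symm
      _ ≤ ‖g p‖ * ‖z‖ := (g p).le_opNorm z
      _ ≤ (1 + ε) * ‖z‖ := by
          apply mul_le_mul_of_nonneg_right _ (norm_nonneg z)
          rw [hgnorm p]; exact hFnorm p
  set S : X → ℝ := fun z => ⨆ p, |g p z| with hS
  have hbdd : ∀ z : X, BddAbove (Set.range fun p => |g p z|) := fun z =>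
    ⟨(1 + ε) * ‖z‖, by rintro _ ⟨p, rfl⟩; exact hgb p z⟩
  have hSle : ∀ z : X, S z ≤ (1 + ε) * ‖z‖ := fun z => ciSup_le (fun p => hgb p z)
  have hSge : ∀ (z : X) p, |g p z| ≤ S z := fun z p => le_ciSup (hbdd z) p
  have hSadd : ∀ z w : X, S (z + w) ≤ S z + S w := by
    intro z w
    refine ciSup_le fun p => ?_
    calc |g p (z + w)| = |g p z + g p w| := by rw [map_add]
      _ ≤ |g p z| + |g p w| := abs_add_le _ _
      _ ≤ S z + S w := add_le_add (hSge z p) (hSge w p)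
  have hSneg : ∀ z : X, S (-z) = S z := by
    intro z
    simp only [hS, map_neg, abs_neg]
  have hSsmul : ∀ (a : ℝ) (z : X), S (a • z) = |a| * S z := by
    intro a z
    rw [hS, Real.mul_iSup_of_nonneg (abs_nonneg a)]
    exact iSup_congr fun p => by rw [map_smul, smul_eq_mul, abs_mul]
  set c : ℝ := ((1 + ε) ^ 2)⁻¹ with hc
  have hc0 : 0 < c := by positivity
  have hc1 : c ≤ 1 := by
    rw [hc, inv_le_one_iff₀]; right; nlinarith
  refine ⟨{ toFun := fun z => max (c * ‖z‖) (S z)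
            map_zero' := by
              simp only [norm_zero, mul_zero, hS, map_zero, abs_zero, ciSup_const, max_self]
            add_le' := by
              intro z w
              refine max_le ?_ ?_
              · calc c * ‖z + w‖ ≤ c * (‖z‖ + ‖w‖) := by
                      exact mul_le_mul_of_nonneg_left (norm_add_le z w) hc0.le
                  _ = c * ‖z‖ + c * ‖w‖ := by ring
                  _ ≤ _ := add_le_add (le_max_left _ _) (le_max_left _ _)
              · calc S (z + w) ≤ S z + S w := hSadd z w
                  _ ≤ _ := add_le_add (le_max_right _ _) (le_max_right _ _)
            neg' := by
              intro z
              show c * ‖-z‖ ⊔ S (-z) = c * ‖z‖ ⊔ S z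
              rw [norm_neg, hSneg]
            smul' := by
              intro a z
              simp only [norm_smul, Real.norm_eq_abs, hSsmul]
              rw [mul_max_of_nonneg _ _ (abs_nonneg a), mul_left_comm] }, ?_, ?_⟩
  · intro z
    constructor
    · exact le_max_left _ _
    · refine max_le ?_ (hSle z)
      calc c * ‖z‖ ≤ 1 * ‖z‖ := mul_le_mul_of_nonneg_right hc1 (norm_nonneg z)
        _ ≤ (1 + ε) * ‖z‖ := by nlinarith [norm_nonneg z]
  · refine ⟨fun n => (x n : X), ?_, ?_⟩
    · intro n
      have hgx : ∀ p, g p ((x n : X)) = F p (x n) := fun p => hg p (x n)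
      have hSub : S ((x n : X)) ≤ 1 := by
        refine ciSup_le ?_
        rintro ⟨i, j, a, b⟩
        rw [hgx]
        by_cases hij : i = j
        · simp [hF, hij]
        · simp only [hF, if_neg hij, ContinuousLinearMap.add_apply,
            ContinuousLinearMap.smul_apply, smul_eq_mul, hbi]
          by_cases hin : i = n
          · have hjn : j ≠ n := fun h => hij (hin.trans h.symm)
            simp only [if_pos hin, if_neg hjn, mul_one, mul_zero, add_zero]
            exact (habs a).le
          · simp only [if_neg hin, mul_zero, zero_add]
            by_cases hjn : j = n
            · simp only [if_pos hjn, mul_one]; exact (habs b).le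
            · simp [if_neg hjn]
      have hSlb : (1:ℝ) ≤ S ((x n : X)) := by
        have h := hSge ((x n : X)) (n, n + 1, true, true)
        rw [hgx] at h
        simp only [hF] at h
        rw [if_neg (Nat.ne_of_lt (Nat.lt_succ_self n))] at h
        simp only [ContinuousLinearMap.add_apply, ContinuousLinearMap.smul_apply,
          smul_eq_mul, hbi, if_pos rfl, hs] at h
        rw [if_neg (by omega : ¬ n + 1 = n)] at h
        simpa using h
      have hS1 : S ((x n : X)) = 1 := le_antisymm hSub hSlb
      have hcx : c * ‖(x n : X)‖ ≤ 1 := by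
        have h1 : c * ‖(x n : X)‖ ≤ c * (1 + ε) := mul_le_mul_of_nonneg_left (hx n) hc0.le
        have h2 : c * (1 + ε) = (1 + ε)⁻¹ := by
          rw [hc]; field_simp
        rw [h2] at h1
        have : (1 + ε)⁻¹ ≤ 1 := by
          rw [inv_le_one_iff₀]; right; linarith
        linarith
      show max (c * ‖(x n : X)‖) (S ((x n : X))) = 1
      rw [hS1]; exact max_eq_right hcx
    · intro n m hnm
      have key : ∀ (b : Bool) (z : X) (y : Y), z = (y : X) →
          f n y + s b * f m y = 2 → (2:ℝ) ≤ max (c * ‖z‖) (S z) := by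
        intro b z y hzy hval
        refine le_trans ?_ (le_max_right _ _)
        have h := hSge z (n, m, true, b)
        have : g (n, m, true, b) z = 2 := by
          rw [hzy, hg]
          simp only [hF, if_neg hnm, ContinuousLinearMap.add_apply,
            ContinuousLinearMap.smul_apply, smul_eq_mul]
          rw [show s true = 1 from rfl, one_mul]
          exact hval
        rw [this] at h
        simpa using h
      constructor
      · refine key true _ (x n + x m) (by push_cast; ring_nf) ?_
        simp only [map_add, hbi, if_pos rfl, if_neg hnm, if_neg (Ne.symm hnm)]
        norm_num [hs]
      · refine key false _ (x n - x m) (by push_cast; ring_nf) ?_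
        simp only [map_sub, hbi, if_pos rfl, if_neg hnm, if_neg (Ne.symm hnm)]
        norm_num [hs]
end

section
/- Let X be a Banach space containing a subspace isomorphic to ℓ¹. Then for every ε ∈ (0,1) there is an equivalent norm |||·||| on X with (1+ε)^{-2}‖x‖ ≤ |||x||| ≤ (1+ε)‖x‖ for all x, such that the unit sphere of (X, |||·|||) contains a normalized bimonotone basic sequence (x_i) which is symmetrically 2-separated: |||x_i ± x_j||| ≥ 2 for all i ≠ j. -/
open Filter Topology

instance : Fact ((1 : ENNReal) ≤ 1) := ⟨le_rfl⟩

set_option linter.unusedVariables false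
set_option synthInstance.maxHeartbeats 1000000
set_option maxHeartbeats 1000000

noncomputable def l1n (a : ℕ →₀ ℝ) : ℝ := a.sum fun _ x => |x|

lemma l1n_eq_sum {a : ℕ →₀ ℝ} {s : Finset ℕ} (hs : a.support ⊆ s) :
    l1n a = ∑ i ∈ s, |a i| :=
  Finsupp.sum_of_support_subset a hs _ (by simp)

lemma l1n_nonneg (a : ℕ →₀ ℝ) : 0 ≤ l1n a := by
  rw [l1n_eq_sum (subset_refl _)]
  exact Finset.sum_nonneg fun i _ => abs_nonneg _

lemma l1n_zero : l1n 0 = 0 := by simp [l1n]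

lemma l1n_eq_zero {a : ℕ →₀ ℝ} (h : l1n a = 0) : a = 0 := by
  by_contra hne
  obtain ⟨i, hi⟩ := Finsupp.ne_iff.mp hne
  simp only [Finsupp.coe_zero, Pi.zero_apply] at hi
  have hmem : i ∈ a.support := Finsupp.mem_support_iff.mpr hi
  have : 0 < l1n a := by
    rw [l1n_eq_sum (subset_refl _)]
    refine Finset.sum_pos' (fun j _ => abs_nonneg _) ⟨i, hmem, abs_pos.mpr hi⟩
  linarith

lemma l1n_smul (c : ℝ) (a : ℕ →₀ ℝ) : l1n (c • a) = |c| * l1n a := by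
  have hs : (c • a).support ⊆ a.support := Finsupp.support_smul
  rw [l1n_eq_sum hs, l1n_eq_sum (subset_refl _), Finset.mul_sum]
  refine Finset.sum_congr rfl fun i _ => ?_
  simp [abs_mul]

lemma l1n_add_le (a b : ℕ →₀ ℝ) : l1n (a + b) ≤ l1n a + l1n b := by
  have hs : (a + b).support ⊆ a.support ∪ b.support := Finsupp.support_add
  rw [l1n_eq_sum hs, l1n_eq_sum (Finset.subset_union_left (s₂ := b.support)),
    l1n_eq_sum (Finset.subset_union_right (s₁ := a.support)), ← Finset.sum_add_distrib]
  exact Finset.sum_le_sum fun i _ => abs_add_le _ _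

lemma l1n_add_of_disjoint {a b : ℕ →₀ ℝ} (h : Disjoint a.support b.support) :
    l1n (a + b) = l1n a + l1n b := by
  have hs : (a + b).support ⊆ a.support ∪ b.support := Finsupp.support_add
  rw [l1n_eq_sum hs, l1n_eq_sum (subset_refl (a := a.support)),
    l1n_eq_sum (subset_refl (a := b.support)), Finset.sum_union h]
  congr 1
  · refine Finset.sum_congr rfl fun i hi => ?_
    have : b i = 0 := Finsupp.notMem_support_iff.mp (Finset.disjoint_left.mp h hi)
    simp [this]
  · refine Finset.sum_congr rfl fun i hi => ?_
    have : a i = 0 := Finsupp.notMem_support_iff.mp (Finset.disjoint_right.mp h hi)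
    simp [this]

lemma abs_linearCombination_le (s : ℕ → ℝ) (hs : ∀ i, |s i| ≤ 1) (f : ℕ →₀ ℝ) :
    |Finsupp.linearCombination ℝ s f| ≤ l1n f := by
  rw [Finsupp.linearCombination_apply, Finsupp.sum, l1n_eq_sum (subset_refl _)]
  refine (Finset.abs_sum_le_sum_abs _ _).trans (Finset.sum_le_sum fun i _ => ?_)
  rw [smul_eq_mul, abs_mul]
  exact mul_le_of_le_one_right (abs_nonneg _) (hs i)

section Construction

variable {X : Type*} [NormedAddCommGroup X] [NormedSpace ℝ X]

theorem main_construction (ε : ℝ) (hε : ε ∈ Set.Ioo (0:ℝ) 1) (u : ℕ → X)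
    (hu : ∀ j, ‖u j‖ = 1)
    (hlow : ∀ (t : Finset ℕ) (b : ℕ → ℝ),
      (1+ε)⁻¹ * ∑ j ∈ t, |b j| ≤ ‖∑ j ∈ t, b j • u j‖) :
    ∃ N : Seminorm ℝ X,
      (∀ z : X, ((1 + ε) ^ 2)⁻¹ * ‖z‖ ≤ N z ∧ N z ≤ (1 + ε) * ‖z‖) ∧
      ∃ x : ℕ → X,
        (∀ i, N (x i) = 1) ∧
        (∀ k n, k ≤ n → ∀ a : ℕ → ℝ,
          N (∑ i ∈ Finset.range k, a i • x i) ≤ N (∑ i ∈ Finset.range n, a i • x i) ∧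
          N (∑ i ∈ Finset.Ico k n, a i • x i) ≤ N (∑ i ∈ Finset.range n, a i • x i)) ∧
        (∀ i j, i ≠ j → 2 ≤ N (x i + x j) ∧ 2 ≤ N (x i - x j)) := by
  obtain ⟨hε0, hε1⟩ := hε
  have hε1' : (0:ℝ) < 1 + ε := by linarith
  set S : (ℕ →₀ ℝ) →ₗ[ℝ] X := Finsupp.linearCombination ℝ u with hSdef
  -- basic estimates for S
  have hS_le : ∀ f : ℕ →₀ ℝ, ‖S f‖ ≤ l1n f := by
    intro f
    rw [hSdef, Finsupp.linearCombination_apply, Finsupp.sum,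
      l1n_eq_sum (subset_refl _)]
    refine (norm_sum_le _ _).trans (Finset.sum_le_sum fun i _ => ?_)
    rw [norm_smul, hu i, mul_one, Real.norm_eq_abs]
  have hS_ge : ∀ f : ℕ →₀ ℝ, (1+ε)⁻¹ * l1n f ≤ ‖S f‖ := by
    intro f
    have := hlow f.support f
    rw [hSdef, Finsupp.linearCombination_apply, Finsupp.sum,
      l1n_eq_sum (subset_refl _)]
    exact this
  have hS_ge' : ∀ f : ℕ →₀ ℝ, l1n f ≤ (1+ε) * ‖S f‖ := by
    intro f
    have h := hS_ge f
    rw [inv_mul_le_iff₀ hε1'] at h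
    exact h
  have hS_inj : Function.Injective S := by
    intro f g hfg
    have h0 : S (f - g) = 0 := by rw [map_sub, hfg, sub_self]
    have := hS_ge' (f - g)
    rw [h0, norm_zero, mul_zero] at this
    have := le_antisymm this (l1n_nonneg _)
    have := l1n_eq_zero this
    exact sub_eq_zero.mp this
  -- the seminorm as an infimum
  set Nv : X → ℝ := fun z => sInf (Set.range fun f : ℕ →₀ ℝ => (1+ε)*‖z - S f‖ + l1n f)
    with hNvdef
  have hne : ∀ z : X, (Set.range fun f : ℕ →₀ ℝ =>
      (1+ε)*‖z - S f‖ + l1n f).Nonempty := fun z => ⟨_, 0, rfl⟩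
  have hlb : ∀ z : X, ∀ r ∈ (Set.range fun f : ℕ →₀ ℝ =>
      (1+ε)*‖z - S f‖ + l1n f), ‖z‖ ≤ r := by
    rintro z r ⟨f, rfl⟩
    have h1 : ‖z‖ ≤ ‖z - S f‖ + ‖S f‖ := by
      have := norm_add_le (z - S f) (S f); simpa using this
    have h2 : ‖z - S f‖ ≤ (1+ε)*‖z - S f‖ := by nlinarith [norm_nonneg (z - S f)]
    have h3 := hS_le f
    simp only
    linarith
  have hbdd : ∀ z : X, BddBelow (Set.range fun f : ℕ →₀ ℝ =>
      (1+ε)*‖z - S f‖ + l1n f) := fun z => ⟨‖z‖, hlb z⟩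
  have hNv_le : ∀ (z : X) (f : ℕ →₀ ℝ), Nv z ≤ (1+ε)*‖z - S f‖ + l1n f :=
    fun z f => csInf_le (hbdd z) ⟨f, rfl⟩
  have hNv_ge : ∀ z : X, ‖z‖ ≤ Nv z := fun z => le_csInf (hne z) (hlb z)
  have hNv_upper : ∀ z : X, Nv z ≤ (1+ε) * ‖z‖ := by
    intro z
    have := hNv_le z 0
    simpa [l1n_zero] using this
  have hNv_zero : Nv 0 = 0 := by
    have h1 := hNv_le 0 0
    simp only [map_zero, sub_zero, norm_zero, mul_zero, l1n_zero, add_zero] at h1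
    have h2 := hNv_ge 0
    rw [norm_zero] at h2
    linarith
  have htri : ∀ z w : X, Nv (z + w) ≤ Nv z + Nv w := by
    intro z w
    refine le_of_forall_pos_le_add fun δ hδ => ?_
    obtain ⟨r1, ⟨f1, rfl⟩, hr1⟩ := exists_lt_of_csInf_lt (hne z)
      (show Nv z < Nv z + δ/2 by linarith)
    obtain ⟨r2, ⟨f2, rfl⟩, hr2⟩ := exists_lt_of_csInf_lt (hne w)
      (show Nv w < Nv w + δ/2 by linarith)
    have key : Nv (z + w) ≤ (1+ε)*‖z + w - S (f1 + f2)‖ + l1n (f1 + f2) :=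
      hNv_le _ _
    have heq : z + w - S (f1 + f2) = (z - S f1) + (w - S f2) := by
      rw [map_add]; abel
    have h1 : ‖z + w - S (f1 + f2)‖ ≤ ‖z - S f1‖ + ‖w - S f2‖ := by
      rw [heq]; exact norm_add_le _ _
    have h2 := l1n_add_le f1 f2
    have h3 : (1+ε)*‖z + w - S (f1 + f2)‖ ≤
        (1+ε)*‖z - S f1‖ + (1+ε)*‖w - S f2‖ := by nlinarith
    simp only at key hr1 hr2 ⊢
    linarith
  have hsm : ∀ (c : ℝ) (z : X), Nv (c • z) ≤ |c| * Nv z := by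
    intro c z
    rcases eq_or_ne c 0 with rfl | hc
    · simp [hNv_zero]
    · have habs : (0:ℝ) < |c| := abs_pos.mpr hc
      have h2 : ∀ r ∈ (Set.range fun f : ℕ →₀ ℝ => (1+ε)*‖z - S f‖ + l1n f),
          |c|⁻¹ * Nv (c • z) ≤ r := by
        rintro r ⟨f, rfl⟩
        have h3 := hNv_le (c • z) (c • f)
        have heq : (1+ε)*‖c • z - S (c • f)‖ + l1n (c • f) =
            |c| * ((1+ε)*‖z - S f‖ + l1n f) := by
          rw [map_smul, ← smul_sub, norm_smul, l1n_smul, Real.norm_eq_abs]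
          ring
        rw [heq] at h3
        rw [inv_mul_le_iff₀ habs]
        exact h3
      have h4 : |c|⁻¹ * Nv (c • z) ≤ Nv z := le_csInf (hne z) h2
      calc Nv (c • z) = |c| * (|c|⁻¹ * Nv (c • z)) := by field_simp
        _ ≤ |c| * Nv z := mul_le_mul_of_nonneg_left h4 habs.le
  have hsm_eq : ∀ (c : ℝ) (z : X), Nv (c • z) = |c| * Nv z := by
    intro c z
    rcases eq_or_ne c 0 with rfl | hc
    · simp [hNv_zero]
    · refine le_antisymm (hsm c z) ?_
      have h1 : Nv z ≤ |c⁻¹| * Nv (c • z) := by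
        have := hsm c⁻¹ (c • z)
        rwa [smul_smul, inv_mul_cancel₀ hc, one_smul] at this
      have habs : (0:ℝ) < |c| := abs_pos.mpr hc
      calc |c| * Nv z ≤ |c| * (|c⁻¹| * Nv (c • z)) :=
            mul_le_mul_of_nonneg_left h1 habs.le
        _ = Nv (c • z) := by rw [abs_inv]; field_simp
  set N : Seminorm ℝ X :=
    { toFun := Nv
      map_zero' := hNv_zero
      add_le' := htri
      neg' := by
        intro z
        have := hsm_eq (-1) z
        simpa using this
      smul' := by
        intro c z
        show Nv (c • z) = ‖c‖ * Nv z
        rw [hsm_eq c z, Real.norm_eq_abs] } with hNdef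
  have hNapp : ∀ z : X, N z = Nv z := fun _ => rfl
  -- dual functionals
  have hfunc : ∀ s : ℕ → ℝ, (∀ i, |s i| ≤ 1) →
      ∃ g : X →L[ℝ] ℝ, (∀ f : ℕ →₀ ℝ, g (S f) = Finsupp.linearCombination ℝ s f) ∧
        ∀ z : X, |g z| ≤ Nv z := by
    intro s hs
    set p : Submodule ℝ X := LinearMap.range S with hpdef
    set eqv : (ℕ →₀ ℝ) ≃ₗ[ℝ] p := LinearEquiv.ofInjective S hS_inj with heqvdef
    set ψ : p →ₗ[ℝ] ℝ :=
      (Finsupp.linearCombination ℝ s).comp eqv.symm.toLinearMap with hψdef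
    have hcoe : ∀ v : p, S (eqv.symm v) = (v : X) := by
      intro v
      rw [heqvdef]
      exact LinearEquiv.ofInjective_symm_apply (f := S) (h := hS_inj) v
    have hbound : ∀ v : p, ‖ψ v‖ ≤ (1+ε) * ‖v‖ := by
      intro v
      have h1 : ‖ψ v‖ = |Finsupp.linearCombination ℝ s (eqv.symm v)| := rfl
      rw [h1]
      refine (abs_linearCombination_le s hs _).trans ?_
      have h2 := hS_ge' (eqv.symm v)
      rw [hcoe v] at h2
      exact h2
    set ψc : p →L[ℝ] ℝ := ψ.mkContinuous (1+ε) hbound with hψcdef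
    obtain ⟨g, hgext, hgnorm⟩ := exists_extension_norm_eq p ψc
    have hgn : ‖g‖ ≤ 1 + ε := by
      rw [hgnorm]
      exact ψ.mkContinuous_norm_le hε1'.le hbound
    have hg1 : ∀ f : ℕ →₀ ℝ, g (S f) = Finsupp.linearCombination ℝ s f := by
      intro f
      have hmem : S f ∈ p := ⟨f, rfl⟩
      have h1 : g (S f) = ψc ⟨S f, hmem⟩ := hgext ⟨S f, hmem⟩
      have h2 : ψc ⟨S f, hmem⟩ = Finsupp.linearCombination ℝ s (eqv.symm ⟨S f, hmem⟩) :=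
        rfl
      have h3 : eqv.symm ⟨S f, hmem⟩ = f := by
        have : eqv f = ⟨S f, hmem⟩ := Subtype.ext (LinearEquiv.ofInjective_apply S f)
        rw [← this, LinearEquiv.symm_apply_apply]
      rw [h1, h2, h3]
    refine ⟨g, hg1, fun z => ?_⟩
    refine le_csInf (hne z) ?_
    rintro r ⟨f, rfl⟩
    have h1 : g z = g (z - S f) + g (S f) := by rw [map_sub]; ring
    have h2 : |g (z - S f)| ≤ (1+ε) * ‖z - S f‖ := by
      refine (g.le_opNorm _).trans ?_
      exact mul_le_mul_of_nonneg_right hgn (norm_nonneg _)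
    have h3 : |g (S f)| ≤ l1n f := by
      rw [hg1 f]; exact abs_linearCombination_le s hs f
    calc |g z| ≤ |g (z - S f)| + |g (S f)| := by rw [h1]; exact abs_add_le _ _
      _ ≤ (1+ε)*‖z - S f‖ + l1n f := add_le_add h2 h3
  -- exact formula on finite combinations
  have hform : ∀ (t : Finset ℕ) (b : ℕ → ℝ),
      Nv (∑ i ∈ t, b i • u i) = ∑ i ∈ t, |b i| := by
    intro t b
    set f : ℕ →₀ ℝ := ∑ i ∈ t, Finsupp.single i (b i) with hfdef
    have hSf : S f = ∑ i ∈ t, b i • u i := by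
      rw [hfdef, map_sum]
      exact Finset.sum_congr rfl fun i _ => Finsupp.linearCombination_single ℝ (b i) i
    have hsupp : f.support ⊆ t := by
      refine (Finsupp.support_finset_sum).trans ?_
      intro i hi
      obtain ⟨j, hj, hij⟩ := Finset.mem_biUnion.mp hi
      have := Finsupp.support_single_subset hij
      rw [Finset.mem_singleton] at this
      rwa [this]
    have hfi : ∀ i ∈ t, f i = b i := by
      intro i hi
      rw [hfdef, Finsupp.finset_sum_apply]
      rw [Finset.sum_eq_single i (fun j _ hji => Finsupp.single_eq_of_ne' hji)
        (fun h => absurd hi h)]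
      exact Finsupp.single_eq_same
    have hl1 : l1n f = ∑ i ∈ t, |b i| := by
      rw [l1n_eq_sum hsupp]
      exact Finset.sum_congr rfl fun i hi => by rw [hfi i hi]
    refine le_antisymm ?_ ?_
    · have := hNv_le (∑ i ∈ t, b i • u i) f
      rw [hSf] at this
      simpa [hl1] using this
    · set s : ℕ → ℝ := fun i => if 0 ≤ b i then 1 else -1 with hsdef
      have hs : ∀ i, |s i| ≤ 1 := by
        intro i; rw [hsdef]; dsimp only; split <;> simp
      obtain ⟨g, hg1, hg2⟩ := hfunc s hs
      have hval : Finsupp.linearCombination ℝ s f = ∑ i ∈ t, |b i| := by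
        rw [Finsupp.linearCombination_apply]
        rw [Finsupp.sum_of_support_subset f hsupp _ (fun i _ => zero_smul ℝ (s i))]
        refine Finset.sum_congr rfl fun i hi => ?_
        rw [hfi i hi, smul_eq_mul, hsdef]
        dsimp only
        split
        · rw [mul_one, abs_of_nonneg ‹_›]
        · rw [mul_neg_one, abs_of_neg (lt_of_not_ge ‹_›)]
      have h1 : g (∑ i ∈ t, b i • u i) = ∑ i ∈ t, |b i| := by
        rw [← hSf, hg1, hval]
      calc (∑ i ∈ t, |b i|) = g (∑ i ∈ t, b i • u i) := h1.symm
        _ ≤ |g (∑ i ∈ t, b i • u i)| := le_abs_self _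
        _ ≤ Nv (∑ i ∈ t, b i • u i) := hg2 _
  -- conclusion
  have hsq : ∀ z : X, ((1 + ε) ^ 2)⁻¹ * ‖z‖ ≤ Nv z := by
    intro z
    have h1 : ((1 + ε) ^ 2)⁻¹ ≤ 1 := by
      rw [inv_le_one_iff₀]; right; nlinarith
    calc ((1 + ε) ^ 2)⁻¹ * ‖z‖ ≤ 1 * ‖z‖ :=
          mul_le_mul_of_nonneg_right h1 (norm_nonneg z)
      _ = ‖z‖ := one_mul _
      _ ≤ Nv z := hNv_ge z
  refine ⟨N, fun z => ⟨hsq z, hNv_upper z⟩, u, ?_, ?_, ?_⟩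
  · intro i
    have := hform {i} (fun _ => 1)
    simpa [hNapp] using this
  · intro k n hkn a
    rw [hNapp, hNapp, hNapp, hform, hform, hform]
    constructor
    · refine Finset.sum_le_sum_of_subset_of_nonneg
        (Finset.range_subset_range.mpr hkn) (fun i _ _ => abs_nonneg _)
    · refine Finset.sum_le_sum_of_subset_of_nonneg ?_ (fun i _ _ => abs_nonneg _)
      intro i hi
      exact Finset.mem_range.mpr (Finset.mem_Ico.mp hi).2
  · intro i j hij
    constructor
    · have h1 := hform {i, j} (fun _ => 1)
      rw [Finset.sum_pair hij, Finset.sum_pair hij] at h1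
      simp only [one_smul] at h1
      rw [hNapp, h1]
      norm_num
    · have hne' : ¬ j = i := Ne.symm hij
      have h1 := hform {i, j} (fun k => if k = i then 1 else -1)
      rw [Finset.sum_pair hij, Finset.sum_pair hij] at h1
      simp only [if_pos, if_neg hne', ite_true, one_smul, neg_one_smul,
        abs_one, abs_neg] at h1
      rw [hNapp, sub_eq_add_neg, h1]
      norm_num

end Construction

section James

variable {X : Type*} [NormedAddCommGroup X] [NormedSpace ℝ X]

theorem james_lemma (A : (ℕ →₀ ℝ) →ₗ[ℝ] X) (m M : ℝ) (hm : 0 < m)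
    (hA1 : ∀ a, m * l1n a ≤ ‖A a‖) (hA2 : ∀ a, ‖A a‖ ≤ M * l1n a)
    (ε : ℝ) (hε : ε ∈ Set.Ioo (0:ℝ) 1) :
    ∃ u : ℕ → X, (∀ j, ‖u j‖ = 1) ∧
      ∀ (t : Finset ℕ) (b : ℕ → ℝ),
        (1+ε)⁻¹ * ∑ j ∈ t, |b j| ≤ ‖∑ j ∈ t, b j • u j‖ := by
  obtain ⟨hε0, hε1⟩ := hε
  -- the sets R n and the numbers c n
  set R : ℕ → Set ℝ := fun n =>
    {r | ∃ a : ℕ →₀ ℝ, (∀ i ∈ a.support, n ≤ i) ∧ l1n a = 1 ∧ r = ‖A a‖} with hRdef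
  have hsingle : ∀ n : ℕ, l1n (Finsupp.single n (1:ℝ)) = 1 := by
    intro n
    rw [l1n_eq_sum (Finsupp.support_single_subset)]
    simp
  have hRne : ∀ n, (R n).Nonempty := by
    intro n
    refine ⟨‖A (Finsupp.single n 1)‖, Finsupp.single n 1, ?_, hsingle n, rfl⟩
    intro i hi
    have := Finsupp.support_single_subset hi
    rw [Finset.mem_singleton] at this
    omega
  have hRlb : ∀ n, ∀ r ∈ R n, m ≤ r := by
    rintro n r ⟨a, _, hl1, rfl⟩
    have := hA1 a
    rw [hl1, mul_one] at this
    exact this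
  have hRbdd : ∀ n, BddBelow (R n) := fun n => ⟨m, hRlb n⟩
  have hRub : ∀ n, ∀ r ∈ R n, r ≤ M := by
    rintro n r ⟨a, _, hl1, rfl⟩
    have := hA2 a
    rw [hl1, mul_one] at this
    exact this
  set c : ℕ → ℝ := fun n => sInf (R n) with hcdef
  have hcm : ∀ n, m ≤ c n := fun n => le_csInf (hRne n) (hRlb n)
  have hcM : ∀ n, c n ≤ M := by
    intro n
    obtain ⟨r, hr⟩ := hRne n
    exact (csInf_le (hRbdd n) hr).trans (hRub n r hr)
  have hcmono : ∀ k n, k ≤ n → c k ≤ c n := by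
    intro k n hkn
    refine csInf_le_csInf (hRbdd k) (hRne n) ?_
    rintro r ⟨a, hsupp, hl1, rfl⟩
    exact ⟨a, fun i hi => hkn.trans (hsupp i hi), hl1, rfl⟩
  set C : ℝ := ⨆ n, c n with hCdef
  have hCbdd : BddAbove (Set.range c) := ⟨M, by rintro _ ⟨n, rfl⟩; exact hcM n⟩
  have hCub : ∀ n, c n ≤ C := fun n => le_ciSup hCbdd n
  have hC0 : 0 < C := lt_of_lt_of_le hm ((hcm 0).trans (hCub 0))
  -- scaling: lower bound with c n
  have hA_low : ∀ (n : ℕ) (a : ℕ →₀ ℝ), (∀ i ∈ a.support, n ≤ i) →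
      c n * l1n a ≤ ‖A a‖ := by
    intro n a hsupp
    rcases eq_or_ne a 0 with rfl | ha
    · simp [l1n_zero]
    · have hl0 : 0 < l1n a := by
        rcases lt_or_eq_of_le (l1n_nonneg a) with h | h
        · exact h
        · exact absurd (l1n_eq_zero h.symm) ha
      set a' : ℕ →₀ ℝ := (l1n a)⁻¹ • a with ha'def
      have hl1' : l1n a' = 1 := by
        rw [ha'def, l1n_smul, abs_of_pos (inv_pos.mpr hl0), inv_mul_cancel₀ hl0.ne']
      have hsupp' : ∀ i ∈ a'.support, n ≤ i := fun i hi =>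
        hsupp i (Finsupp.support_smul hi)
      have hmem : ‖A a'‖ ∈ R n := ⟨a', hsupp', hl1', rfl⟩
      have h1 : c n ≤ ‖A a'‖ := csInf_le (hRbdd n) hmem
      have h2 : A a = l1n a • A a' := by
        rw [ha'def, map_smul, smul_smul, mul_inv_cancel₀ hl0.ne', one_smul]
      rw [h2, norm_smul, Real.norm_eq_abs, abs_of_pos hl0, mul_comm (c n)]
      exact mul_le_mul_of_nonneg_left h1 hl0.le
  -- selection of near-minimizers
  have hsel : ∀ n : ℕ, ∃ a : ℕ →₀ ℝ, (∀ i ∈ a.support, n ≤ i) ∧ l1n a = 1 ∧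
      ‖A a‖ < C * (1 + ε/4) := by
    intro n
    have hlt : c n < C * (1 + ε/4) := by nlinarith [hCub n]
    obtain ⟨r, hrmem, hrlt⟩ := exists_lt_of_csInf_lt (hRne n) hlt
    obtain ⟨a, hsupp, hl1, rfl⟩ := hrmem
    exact ⟨a, hsupp, hl1, hrlt⟩
  choose W hW1 hW2 hW3 using hsel
  -- choice of n₀
  have hn₀ : ∃ n₀, C * (1 - ε/4) < c n₀ := by
    refine exists_lt_of_lt_ciSup ?_
    nlinarith
  obtain ⟨n₀, hn₀⟩ := hn₀
  -- the recursive sequence of blocks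
  set ν : ℕ → ℕ := fun k =>
    Nat.rec n₀ (fun _ p => max p ((W p).support.sup id + 1)) k with hνdef
  have hν0 : ν 0 = n₀ := rfl
  have hνsucc : ∀ k, ν (k+1) = max (ν k) ((W (ν k)).support.sup id + 1) := fun k => rfl
  set v : ℕ → (ℕ →₀ ℝ) := fun j => W (ν j) with hvdef
  have hνmono : Monotone ν := monotone_nat_of_le_succ fun k => by
    rw [hνsucc]; exact le_max_left _ _
  have hsupp_lb : ∀ j, ∀ i ∈ (v j).support, ν j ≤ i := fun j => hW1 (ν j)
  have hsupp_ub : ∀ j, ∀ i ∈ (v j).support, i < ν (j+1) := by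
    intro j i hi
    have h1 : i ≤ (W (ν j)).support.sup id := Finset.le_sup (f := id) hi
    rw [hνsucc]
    have : i < (W (ν j)).support.sup id + 1 := Nat.lt_succ_of_le h1
    exact lt_of_lt_of_le this (le_max_right _ _)
  have hdisj : ∀ j j', j ≠ j' → Disjoint (v j).support (v j').support := by
    have key : ∀ j j', j < j' → Disjoint (v j).support (v j').support := by
      intro j j' h
      rw [Finset.disjoint_left]
      intro i hi hi'
      have h1 := hsupp_ub j i hi
      have h2 := hsupp_lb j' i hi'
      have h3 : ν (j+1) ≤ ν j' := hνmono h
      omega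
    intro j j' h
    rcases h.lt_or_gt with h | h
    · exact key _ _ h
    · exact (key _ _ h).symm
  have hn0le : ∀ j, ∀ i ∈ (v j).support, n₀ ≤ i := by
    intro j i hi
    have := hsupp_lb j i hi
    have h2 : ν 0 ≤ ν j := hνmono (Nat.zero_le j)
    rw [hν0] at h2
    omega
  -- ℓ¹ additivity of disjoint blocks
  have hl1sum : ∀ (t : Finset ℕ) (b : ℕ → ℝ),
      l1n (∑ j ∈ t, b j • v j) = ∑ j ∈ t, |b j| := by
    intro t b
    induction t using Finset.cons_induction with
    | empty => simp [l1n_zero]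
    | cons j t hj ih =>
      rw [Finset.sum_cons, Finset.sum_cons]
      have hdisj2 : Disjoint (b j • v j).support (∑ j' ∈ t, b j' • v j').support := by
        rw [Finset.disjoint_left]
        intro i hi hi'
        have hij : i ∈ (v j).support := Finsupp.support_smul hi
        obtain ⟨j', hj't, hij'⟩ := Finset.mem_biUnion.mp (Finsupp.support_finset_sum hi')
        have hij' : i ∈ (v j').support := Finsupp.support_smul hij'
        have hne : j ≠ j' := fun h => hj (h ▸ hj't)
        exact Finset.disjoint_left.mp (hdisj j j' hne) hij hij'
      rw [l1n_add_of_disjoint hdisj2, ih, l1n_smul, hW2, mul_one]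
  have hsupp_sum : ∀ (t : Finset ℕ) (b : ℕ → ℝ),
      ∀ i ∈ (∑ j ∈ t, b j • v j).support, n₀ ≤ i := by
    intro t b i hi
    obtain ⟨j, hjt, hij⟩ := Finset.mem_biUnion.mp (Finsupp.support_finset_sum hi)
    exact hn0le j i (Finsupp.support_smul hij)
  -- the normalized vectors
  set d : ℕ → ℝ := fun j => ‖A (v j)‖ with hddef
  have hd_pos : ∀ j, 0 < d j := by
    intro j
    have := hA1 (v j)
    rw [hW2, mul_one] at this
    exact lt_of_lt_of_le hm this
  have hd_lt : ∀ j, d j < C * (1 + ε/4) := fun j => hW3 (ν j)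
  set u : ℕ → X := fun j => (d j)⁻¹ • A (v j) with hudef
  have hu_norm : ∀ j, ‖u j‖ = 1 := by
    intro j
    rw [hudef]
    simp only [norm_smul, Real.norm_eq_abs, abs_of_pos (inv_pos.mpr (hd_pos j))]
    show (d j)⁻¹ * d j = 1
    exact inv_mul_cancel₀ (hd_pos j).ne'
  refine ⟨u, hu_norm, ?_⟩
  intro t b
  have hkey : ∑ j ∈ t, b j • u j = A (∑ j ∈ t, (b j / d j) • v j) := by
    rw [map_sum]
    refine Finset.sum_congr rfl fun j _ => ?_
    rw [map_smul, hudef, smul_smul, div_eq_mul_inv]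
  have h1 : c n₀ * l1n (∑ j ∈ t, (b j / d j) • v j) ≤
      ‖A (∑ j ∈ t, (b j / d j) • v j)‖ :=
    hA_low n₀ _ (hsupp_sum t _)
  have h2 : l1n (∑ j ∈ t, (b j / d j) • v j) = ∑ j ∈ t, |b j| / d j := by
    rw [hl1sum t _]
    refine Finset.sum_congr rfl fun j _ => ?_
    rw [abs_div, abs_of_pos (hd_pos j)]
  have h3 : ∀ j ∈ t, |b j| / (C * (1 + ε/4)) ≤ |b j| / d j := by
    intro j _
    exact div_le_div_of_nonneg_left (abs_nonneg _) (hd_pos j) (hd_lt j).le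
  have h4 : (∑ j ∈ t, |b j|) / (C * (1 + ε/4)) ≤ ∑ j ∈ t, |b j| / d j := by
    rw [Finset.sum_div]
    exact Finset.sum_le_sum h3
  have hcn₀pos : 0 < c n₀ := lt_of_lt_of_le hm (hcm n₀)
  have hsumnn : 0 ≤ ∑ j ∈ t, |b j| := Finset.sum_nonneg fun j _ => abs_nonneg _
  have h5 : (1+ε)⁻¹ * ∑ j ∈ t, |b j| ≤
      c n₀ * ((∑ j ∈ t, |b j|) / (C * (1 + ε/4))) := by
    rw [mul_div_assoc']
    rw [le_div_iff₀ (by nlinarith : (0:ℝ) < C * (1 + ε/4)), inv_mul_eq_div,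
      div_mul_eq_mul_div, div_le_iff₀ (by linarith : (0:ℝ) < 1 + ε)]
    have harith : C * (1 + ε/4) ≤ (1 + ε) * c n₀ := by
      nlinarith [mul_le_mul_of_nonneg_left hn₀.le (by linarith : (0:ℝ) ≤ 1+ε),
        mul_nonneg (mul_nonneg hC0.le hε0.le) (by linarith : (0:ℝ) ≤ 2 - ε)]
    nlinarith [mul_le_mul_of_nonneg_left harith hsumnn]
  calc (1+ε)⁻¹ * ∑ j ∈ t, |b j|
      ≤ c n₀ * ((∑ j ∈ t, |b j|) / (C * (1 + ε/4))) := h5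
    _ ≤ c n₀ * ∑ j ∈ t, |b j| / d j :=
        mul_le_mul_of_nonneg_left h4 hcn₀pos.le
    _ = c n₀ * l1n (∑ j ∈ t, (b j / d j) • v j) := by rw [h2]
    _ ≤ ‖A (∑ j ∈ t, (b j / d j) • v j)‖ := h1
    _ = ‖∑ j ∈ t, b j • u j‖ := by rw [hkey]

end James


/-- If `X` contains a subspace isomorphic to `ℓ¹`, then for every
`ε ∈ (0,1)` there is an equivalent norm `N` with `(1+ε)⁻²‖z‖ ≤ N z ≤ (1+ε)‖z‖` whose
unit sphere contains a normalized bimonotone basic sequence that is symmetrically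
2-separated. -/
theorem contains_l1_renorming_bimonotone_symmetrically_two_separated
    {X : Type*} [NormedAddCommGroup X] [NormedSpace ℝ X] [CompleteSpace X]
    (Y : Submodule ℝ X) (hY : IsClosed (Y : Set X))
    (e : lp (fun _ : ℕ => ℝ) 1 ≃L[ℝ] Y)
    (ε : ℝ) (hε : ε ∈ Set.Ioo (0 : ℝ) 1) :
    ∃ N : Seminorm ℝ X,
      (∀ z : X, ((1 + ε) ^ 2)⁻¹ * ‖z‖ ≤ N z ∧ N z ≤ (1 + ε) * ‖z‖) ∧
      ∃ x : ℕ → X,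
        (∀ i, N (x i) = 1) ∧
        (∀ k n, k ≤ n → ∀ a : ℕ → ℝ,
          N (∑ i ∈ Finset.range k, a i • x i) ≤ N (∑ i ∈ Finset.range n, a i • x i) ∧
          N (∑ i ∈ Finset.Ico k n, a i • x i) ≤ N (∑ i ∈ Finset.range n, a i • x i)) ∧
        (∀ i j, i ≠ j → 2 ≤ N (x i + x j) ∧ 2 ≤ N (x i - x j)) := by
  classical
  set G : (ℕ →₀ ℝ) →ₗ[ℝ] lp (fun _ : ℕ => ℝ) 1 :=
    Finsupp.linearCombination ℝ (fun i => lp.single 1 i (1:ℝ)) with hGdef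
  have hG_norm : ∀ a : ℕ →₀ ℝ, ‖G a‖ = l1n a := by
    intro a
    have h1 : G a = ∑ i ∈ a.support, lp.single 1 i (a i) := by
      rw [hGdef, Finsupp.linearCombination_apply, Finsupp.sum]
      refine Finset.sum_congr rfl fun i _ => ?_
      rw [← lp.single_smul]
      norm_num
    have h2 := lp.norm_sum_single (p := (1:ENNReal)) (E := fun _ : ℕ => ℝ) (by norm_num)
      (fun i => a i) a.support
    simp only [ENNReal.toReal_one, Real.rpow_one, Real.norm_eq_abs] at h2
    rw [h1, h2, l1n_eq_sum (subset_refl _)]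
  set eC : lp (fun _ : ℕ => ℝ) 1 →L[ℝ] Y :=
    (e : lp (fun _ : ℕ => ℝ) 1 →L[ℝ] Y) with heC
  set eS : Y →L[ℝ] lp (fun _ : ℕ => ℝ) 1 :=
    (e.symm : Y →L[ℝ] lp (fun _ : ℕ => ℝ) 1) with heS
  set A : (ℕ →₀ ℝ) →ₗ[ℝ] X :=
    Y.subtype.comp ((e.toLinearEquiv.toLinearMap).comp G) with hAdef
  have hAval : ∀ a, ‖A a‖ = ‖eC (G a)‖ := by
    intro a
    have h1 : A a = ((e (G a) : Y) : X) := rfl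
    rw [h1]
    rfl
  have heSC : ∀ x : lp (fun _ : ℕ => ℝ) 1, eS (eC x) = x := by
    intro x
    rw [heS, heC]
    simp
  have heSpos : 0 < ‖eS‖ := by
    rcases lt_or_ge 0 ‖eS‖ with h | h
    · exact h
    · exfalso
      have h0 : ‖eS‖ = 0 := le_antisymm h (ContinuousLinearMap.opNorm_nonneg _)
      set x : lp (fun _ : ℕ => ℝ) 1 := lp.single 1 0 (1:ℝ) with hxdef
      have hx1 : ‖x‖ = 1 := by
        rw [hxdef]
        have := lp.norm_single (p := (1:ENNReal)) (E := fun _ : ℕ => ℝ) (by norm_num)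
          0 (1:ℝ)
        simpa using this
      have h2 : ‖x‖ ≤ ‖eS‖ * ‖eC x‖ := by
        conv_lhs => rw [← heSC x]
        exact eS.le_opNorm _
      rw [hx1, h0, zero_mul] at h2
      linarith
  set m : ℝ := ‖eS‖⁻¹ with hmdef
  set M : ℝ := ‖eC‖ with hMdef
  have hm : 0 < m := inv_pos.mpr heSpos
  have hA2 : ∀ a, ‖A a‖ ≤ M * l1n a := by
    intro a
    rw [hAval, ← hG_norm]
    exact eC.le_opNorm _
  have hA1 : ∀ a, m * l1n a ≤ ‖A a‖ := by
    intro a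
    have h1 : l1n a ≤ ‖eS‖ * ‖A a‖ := by
      rw [← hG_norm, hAval]
      conv_lhs => rw [← heSC (G a)]
      exact eS.le_opNorm _
    calc m * l1n a ≤ m * (‖eS‖ * ‖A a‖) := mul_le_mul_of_nonneg_left h1 hm.le
      _ = (m * ‖eS‖) * ‖A a‖ := by ring
      _ = ‖A a‖ := by rw [hmdef, inv_mul_cancel₀ heSpos.ne', one_mul]
  obtain ⟨u, hu, hlow⟩ := james_lemma A m M hm hA1 hA2 ε hε
  exact main_construction ε hε u hu hlow
end

section
/- (James non-distortion, used form) If X contains an isomorphic copy of ℓ¹, then for every ε > 0 there is a linear embedding T : ℓ¹ → X with ‖x‖₁ ≤ ‖Tx‖ ≤ (1+ε)‖x‖₁ for all x ∈ ℓ¹. -/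
open Filter Topology

namespace JamesAux

noncomputable section

abbrev E1 := lp (fun _ : ℕ => ℝ) 1

lemma hasSum_abs (f : E1) : HasSum (fun n => |f n|) ‖f‖ := by
  have h := lp.hasSum_norm (p := 1) (E := fun _ : ℕ => ℝ) (by norm_num) f
  simpa using h

lemma summable_abs (f : E1) : Summable fun n => |f n| := (hasSum_abs f).summable

lemma norm_eq_tsum_abs (f : E1) : ‖f‖ = ∑' n, |f n| := (hasSum_abs f).tsum_eq.symm

lemma sum_abs_le (f : E1) (s : Finset ℕ) : ∑ n ∈ s, |f n| ≤ ‖f‖ :=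
  sum_le_hasSum s (fun _ _ => abs_nonneg _) (hasSum_abs f)

lemma norm_single_one (n : ℕ) : ‖(lp.single 1 n (1 : ℝ) : E1)‖ = 1 := by
  have := lp.norm_single (p := (1:ENNReal)) (E := fun _ : ℕ => ℝ) (by norm_num) n (1:ℝ)
  simpa using this

end

end JamesAux

open JamesAux

set_option maxHeartbeats 2000000

/-- James non-distortion, used form. If `X` contains an isomorphic
copy of `ℓ¹`, then for every `ε > 0` there is a linear embedding `T : ℓ¹ → X` with
`‖v‖₁ ≤ ‖T v‖ ≤ (1+ε)‖v‖₁` for all `v`. -/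
theorem james_l1_nondistortion
    {X : Type*} [NormedAddCommGroup X] [NormedSpace ℝ X] [CompleteSpace X]
    (Y : Submodule ℝ X) (hY : IsClosed (Y : Set X))
    (e : lp (fun _ : ℕ => ℝ) 1 ≃L[ℝ] Y)
    (ε : ℝ) (hε : 0 < ε) :
    ∃ T : lp (fun _ : ℕ => ℝ) 1 →L[ℝ] X,
      ∀ v, ‖v‖ ≤ ‖T v‖ ∧ ‖T v‖ ≤ (1 + ε) * ‖v‖ := by
  classical
  set c : ℝ := ‖(e.symm : Y →L[ℝ] lp (fun _ : ℕ => ℝ) 1)‖ with hc_def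
  set b : ℝ := ‖(e : lp (fun _ : ℕ => ℝ) 1 →L[ℝ] Y)‖ with hb_def
  -- basic bounds
  have hupper : ∀ v : E1, ‖((e v : Y) : X)‖ ≤ b * ‖v‖ := by
    intro v
    rw [Submodule.norm_coe]
    exact (e : E1 →L[ℝ] Y).le_opNorm v
  have hlower : ∀ v : E1, ‖v‖ ≤ c * ‖((e v : Y) : X)‖ := by
    intro v
    have : ‖e.symm (e v)‖ ≤ c * ‖e v‖ := (e.symm : Y →L[ℝ] E1).le_opNorm (e v)
    simpa [Submodule.coe_norm] using this
  have hc_pos : 0 < c := by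
    have h1 := hlower (lp.single 1 0 (1:ℝ))
    rw [norm_single_one] at h1
    by_contra h
    push_neg at h
    have : c * ‖((e (lp.single 1 0 (1:ℝ)) : Y) : X)‖ ≤ 0 :=
      mul_nonpos_of_nonpos_of_nonneg h (norm_nonneg _)
    linarith
  -- the sets A n and the quantities lam n
  set A : ℕ → Set ℝ := fun n =>
    {r | ∃ v : E1, ∃ M : ℕ, (∀ i, i < n → v i = 0) ∧ (∀ i, M ≤ i → v i = 0) ∧
      ‖v‖ = 1 ∧ r = ‖((e v : Y) : X)‖} with hA_def
  have hA_ne : ∀ n, (A n).Nonempty := by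
    intro n
    refine ⟨‖((e (lp.single 1 n (1:ℝ)) : Y) : X)‖, lp.single 1 n (1:ℝ), n + 1, ?_, ?_,
      norm_single_one n, rfl⟩
    · intro i hi
      exact lp.single_apply_ne 1 n _ (by omega)
    · intro i hi
      exact lp.single_apply_ne 1 n _ (by omega)
  have hA_lb : ∀ n, ∀ r ∈ A n, c⁻¹ ≤ r := by
    rintro n r ⟨v, M, h0, hM, hv1, rfl⟩
    have h := hlower v
    rw [hv1] at h
    rw [inv_le_iff_one_le_mul₀ hc_pos]
    linarith
  have hA_bdd : ∀ n, BddBelow (A n) := fun n => ⟨c⁻¹, hA_lb n⟩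
  set lam : ℕ → ℝ := fun n => sInf (A n) with hlam_def
  have hlam_lb : ∀ n, c⁻¹ ≤ lam n := fun n => le_csInf (hA_ne n) (hA_lb n)
  have hlam_pos : ∀ n, 0 < lam n := fun n => lt_of_lt_of_le (inv_pos.2 hc_pos) (hlam_lb n)
  have hlam_ub : ∀ n, lam n ≤ b := by
    intro n
    have hmem := hA_ne n
    obtain ⟨r, hr⟩ := hmem
    obtain ⟨v, M, h0, hM, hv1, rfl⟩ := hr
    calc lam n ≤ ‖((e v : Y) : X)‖ := csInf_le (hA_bdd n) ⟨v, M, h0, hM, hv1, rfl⟩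
      _ ≤ b * ‖v‖ := hupper v
      _ = b := by rw [hv1, mul_one]
  have hlam_mono : Monotone lam := by
    intro n m hnm
    refine csInf_le_csInf (hA_bdd n) (hA_ne m) ?_
    rintro r ⟨v, M, h0, hM, hv1, rfl⟩
    exact ⟨v, M, fun i hi => h0 i (lt_of_lt_of_le hi hnm), hM, hv1, rfl⟩
  set Lam : ℝ := ⨆ n, lam n with hLam_def
  have hbdd : BddAbove (Set.range lam) := ⟨b, by rintro r ⟨n, rfl⟩; exact hlam_ub n⟩
  have hlam_le_Lam : ∀ n, lam n ≤ Lam := fun n => le_ciSup hbdd n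
  have hLam_pos : 0 < Lam := lt_of_lt_of_le (hlam_pos 0) (hlam_le_Lam 0)
  -- the scaling inequality
  have hscale : ∀ n (v : E1) (M : ℕ), (∀ i, i < n → v i = 0) → (∀ i, M ≤ i → v i = 0) →
      lam n * ‖v‖ ≤ ‖((e v : Y) : X)‖ := by
    intro n v M h0 hM
    rcases eq_or_ne v 0 with rfl | hv
    · simp
    · have hvn : 0 < ‖v‖ := norm_pos_iff.2 hv
      set w : E1 := ‖v‖⁻¹ • v with hw_def
      have hw_apply : ∀ i, w i = ‖v‖⁻¹ * v i := by
        intro i; rw [hw_def, lp.coeFn_smul]; rfl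
      have hw1 : ‖w‖ = 1 := by
        rw [hw_def, norm_smul, norm_inv, norm_norm, inv_mul_cancel₀ hvn.ne']
      have hmem : ‖((e w : Y) : X)‖ ∈ A n := by
        refine ⟨w, M, ?_, ?_, hw1, rfl⟩
        · intro i hi; rw [hw_apply, h0 i hi, mul_zero]
        · intro i hi; rw [hw_apply, hM i hi, mul_zero]
      have h1 : lam n ≤ ‖((e w : Y) : X)‖ := csInf_le (hA_bdd n) hmem
      have h2 : ((e w : Y) : X) = ‖v‖⁻¹ • ((e v : Y) : X) := by
        rw [hw_def, map_smul]; rfl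
      rw [h2, norm_smul, norm_inv, norm_norm] at h1
      calc lam n * ‖v‖ ≤ (‖v‖⁻¹ * ‖((e v : Y) : X)‖) * ‖v‖ := by
            exact mul_le_mul_of_nonneg_right h1 hvn.le
        _ = ‖((e v : Y) : X)‖ := by field_simp
  -- choose δ
  set δ : ℝ := min 1 (ε / 3) with hδ_def
  have hδ_pos : 0 < δ := lt_min one_pos (by linarith)
  have hδ_le1 : δ ≤ 1 := min_le_left _ _
  have hδ_leε : δ ≤ ε / 3 := min_le_right _ _
  have h1δ : (0:ℝ) < 1 + δ := by linarith
  -- choose n₀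
  have hex : ∃ n₀, Lam / (1 + δ) < lam n₀ := by
    apply exists_lt_of_lt_ciSup
    rw [div_lt_iff₀ h1δ]
    nlinarith
  obtain ⟨n₀, hn₀⟩ := hex
  -- block existence
  have hblock : ∀ m : ℕ, ∃ u : E1, ∃ M : ℕ, m < M ∧ (∀ i, i < m → u i = 0) ∧
      (∀ i, M ≤ i → u i = 0) ∧ ‖u‖ = 1 ∧ ‖((e u : Y) : X)‖ < (1 + δ) * Lam := by
    intro m
    have h1 : lam m < (1 + δ) * Lam := by nlinarith [hlam_le_Lam m]
    obtain ⟨r, hrA, hrlt⟩ := exists_lt_of_csInf_lt (hA_ne m) h1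
    obtain ⟨v, M, h0, hM, hv1, rfl⟩ := hrA
    refine ⟨v, max M (m+1), by omega, h0, ?_, hv1, hrlt⟩
    intro i hi
    exact hM i (le_trans (le_max_left _ _) hi)
  choose u M hM hu0 huM hu1 hue using hblock
  -- the sequence of breakpoints
  set N : ℕ → ℕ := fun k => Nat.rec n₀ (fun _ m => M m) k with hN_def
  have hN0 : N 0 = n₀ := rfl
  have hNsucc : ∀ k, N (k + 1) = M (N k) := fun k => rfl
  have hNlt : ∀ k, N k < N (k + 1) := fun k => by rw [hNsucc]; exact hM (N k)
  have hNmono : StrictMono N := strictMono_nat_of_lt_succ hNlt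
  set U : ℕ → E1 := fun k => u (N k) with hU_def
  have hU0 : ∀ k i, i < N k → U k i = 0 := fun k i hi => hu0 (N k) i hi
  have hUM : ∀ k i, N (k + 1) ≤ i → U k i = 0 := fun k i hi => huM (N k) i (by rw [hNsucc] at hi; exact hi)
  have hU1 : ∀ k, ‖U k‖ = 1 := fun k => hu1 (N k)
  set x : ℕ → X := fun k => ((e (U k) : Y) : X) with hx_def
  set C : ℝ := (1 + δ) * Lam with hC_def
  have hx_le : ∀ k, ‖x k‖ ≤ C := fun k => (hue (N k)).le
  have hC_pos : 0 < C := mul_pos h1δ hLam_pos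
  -- summability
  have hsum_norm : ∀ v : E1, Summable (fun k => ‖v k • x k‖) := by
    intro v
    refine Summable.of_nonneg_of_le (fun k => norm_nonneg _) (fun k => ?_)
      ((summable_abs v).mul_right C)
    rw [norm_smul, Real.norm_eq_abs]
    exact mul_le_mul_of_nonneg_left (hx_le k) (abs_nonneg _)
  have hsum : ∀ v : E1, Summable (fun k => v k • x k) := fun v => (hsum_norm v).of_norm
  -- the linear map
  set L : E1 →ₗ[ℝ] X :=
    { toFun := fun v => ∑' k, v k • x k
      map_add' := by
        intro v w
        have h : ∀ k, (v + w) k • x k = v k • x k + w k • x k := by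
          intro k
          rw [lp.coeFn_add]
          simp [add_smul]
        simp_rw [h]
        exact Summable.tsum_add (hsum v) (hsum w)
      map_smul' := by
        intro a v
        have h : ∀ k, (a • v) k • x k = a • (v k • x k) := by
          intro k
          rw [lp.coeFn_smul]
          simp [smul_smul]
        simp_rw [h]
        exact Summable.tsum_const_smul a (hsum v) } with hL_def
  have hL_apply : ∀ v : E1, L v = ∑' k, v k • x k := fun v => rfl
  have hL_bound : ∀ v : E1, ‖L v‖ ≤ C * ‖v‖ := by
    intro v
    rw [hL_apply]
    calc ‖∑' k, v k • x k‖ ≤ ∑' k, ‖v k • x k‖ := norm_tsum_le_tsum_norm (hsum_norm v)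
      _ ≤ ∑' k, C * |v k| := by
          refine Summable.tsum_le_tsum (fun k => ?_) (hsum_norm v) ((summable_abs v).mul_left C)
          rw [norm_smul, Real.norm_eq_abs, mul_comm]
          exact mul_le_mul_of_nonneg_right (hx_le k) (abs_nonneg _)
      _ = C * ∑' k, |v k| := tsum_mul_left
      _ = C * ‖v‖ := by rw [norm_eq_tsum_abs]
  set T₀ : E1 →L[ℝ] X := L.mkContinuous C hL_bound with hT₀_def
  have hT₀_apply : ∀ v : E1, T₀ v = ∑' k, v k • x k := fun v => rfl
  have hT₀_bound : ∀ v : E1, ‖T₀ v‖ ≤ C * ‖v‖ := hL_bound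
  -- key finite inequality
  have hfin : ∀ (v : E1) (K : ℕ),
      lam n₀ * (∑ k ∈ Finset.range K, |v k|) ≤ ‖∑ k ∈ Finset.range K, v k • x k‖ := by
    intro v K
    set w : E1 := ∑ k ∈ Finset.range K, v k • U k with hw_def
    have hw_apply : ∀ i, w i = ∑ k ∈ Finset.range K, v k * U k i := by
      intro i
      rw [hw_def, lp.coeFn_sum, Finset.sum_apply]
      refine Finset.sum_congr rfl fun k _ => ?_
      rw [lp.coeFn_smul]; rfl
    have hw0 : ∀ i, i < n₀ → w i = 0 := by
      intro i hi
      rw [hw_apply]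
      refine Finset.sum_eq_zero fun k _ => ?_
      rw [hU0 k i (lt_of_lt_of_le hi (hNmono.monotone (Nat.zero_le k))), mul_zero]
    have hwM : ∀ i, N K ≤ i → w i = 0 := by
      intro i hi
      rw [hw_apply]
      refine Finset.sum_eq_zero fun k hk => ?_
      rw [Finset.mem_range] at hk
      rw [hUM k i (le_trans (hNmono.monotone hk) hi), mul_zero]
    have hew : ((e w : Y) : X) = ∑ k ∈ Finset.range K, v k • x k := by
      rw [hw_def, map_sum]
      push_cast
      refine Finset.sum_congr rfl fun k _ => ?_
      rw [map_smul]
      rfl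
    have hstep1 : lam n₀ * ‖w‖ ≤ ‖((e w : Y) : X)‖ := hscale n₀ w (N K) hw0 hwM
    have hUsum : ∀ k, ∑ i ∈ Finset.Ico (N k) (N (k+1)), |U k i| = 1 := by
      intro k
      have h := norm_eq_tsum_abs (U k)
      rw [hU1 k] at h
      have h2 : ∑' i, |U k i| = ∑ i ∈ Finset.Ico (N k) (N (k+1)), |U k i| := by
        refine tsum_eq_sum fun i hi => ?_
        rw [Finset.mem_Ico] at hi
        push_neg at hi
        rcases lt_or_ge i (N k) with h3 | h3
        · rw [hU0 k i h3, abs_zero]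
        · rw [hUM k i (hi h3), abs_zero]
      rw [← h2, ← h]
    have hwin : ∀ k, k < K → ∀ i ∈ Finset.Ico (N k) (N (k+1)), w i = v k * U k i := by
      intro k hk i hi
      rw [Finset.mem_Ico] at hi
      rw [hw_apply]
      refine Finset.sum_eq_single_of_mem k (Finset.mem_range.2 hk) fun j _ hjk => ?_
      rcases lt_or_gt_of_ne hjk with h | h
      · rw [hUM j i (le_trans (hNmono.monotone h) hi.1), mul_zero]
      · rw [hU0 j i (lt_of_lt_of_le hi.2 (hNmono.monotone h)), mul_zero]
    have hdisj : Set.PairwiseDisjoint ↑(Finset.range K)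
        (fun k => Finset.Ico (N k) (N (k+1))) := by
      intro j _ k _ hjk
      refine Finset.disjoint_left.2 fun i hij hik => ?_
      rw [Finset.mem_Ico] at hij hik
      rcases lt_or_gt_of_ne hjk with h | h
      · exact absurd hik.1 (not_le.2 (lt_of_lt_of_le hij.2 (hNmono.monotone h)))
      · exact absurd hij.1 (not_le.2 (lt_of_lt_of_le hik.2 (hNmono.monotone h)))
    have hcomb : ∑ k ∈ Finset.range K, |v k| ≤ ‖w‖ := by
      calc ∑ k ∈ Finset.range K, |v k|
          = ∑ k ∈ Finset.range K, |v k| * (∑ i ∈ Finset.Ico (N k) (N (k+1)), |U k i|) := by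
            refine Finset.sum_congr rfl fun k _ => ?_
            rw [hUsum k, mul_one]
        _ = ∑ k ∈ Finset.range K, ∑ i ∈ Finset.Ico (N k) (N (k+1)), |w i| := by
            refine Finset.sum_congr rfl fun k hk => ?_
            rw [Finset.mul_sum]
            refine Finset.sum_congr rfl fun i hi => ?_
            rw [hwin k (Finset.mem_range.1 hk) i hi, abs_mul]
        _ = ∑ i ∈ (Finset.range K).biUnion (fun k => Finset.Ico (N k) (N (k+1))), |w i| :=
            (Finset.sum_biUnion hdisj).symm
        _ ≤ ‖w‖ := sum_abs_le w _
    calc lam n₀ * (∑ k ∈ Finset.range K, |v k|) ≤ lam n₀ * ‖w‖ :=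
          mul_le_mul_of_nonneg_left hcomb (hlam_pos n₀).le
      _ ≤ ‖((e w : Y) : X)‖ := hstep1
      _ = ‖∑ k ∈ Finset.range K, v k • x k‖ := by rw [hew]
  -- pass to the limit
  have hkey : ∀ v : E1, lam n₀ * ‖v‖ ≤ ‖T₀ v‖ := by
    intro v
    have h1 : Tendsto (fun K => ∑ k ∈ Finset.range K, v k • x k) atTop (𝓝 (T₀ v)) := by
      rw [hT₀_apply]
      exact (hsum v).hasSum.tendsto_sum_nat
    have h2 := h1.norm
    have h3 : Tendsto (fun K => lam n₀ * ∑ k ∈ Finset.range K, |v k|) atTop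
        (𝓝 (lam n₀ * ‖v‖)) := ((hasSum_abs v).tendsto_sum_nat).const_mul _
    exact le_of_tendsto_of_tendsto' h3 h2 (fun K => hfin v K)
  -- conclusion
  refine ⟨(lam n₀)⁻¹ • T₀, fun v => ?_⟩
  have hinv_pos : (0:ℝ) < (lam n₀)⁻¹ := inv_pos.2 (hlam_pos n₀)
  have hnorm : ‖((lam n₀)⁻¹ • T₀) v‖ = (lam n₀)⁻¹ * ‖T₀ v‖ := by
    rw [ContinuousLinearMap.smul_apply, norm_smul, Real.norm_eq_abs, abs_of_pos hinv_pos]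
  constructor
  · rw [hnorm]
    have h := mul_le_mul_of_nonneg_left (hkey v) hinv_pos.le
    rw [← mul_assoc, inv_mul_cancel₀ (hlam_pos n₀).ne', one_mul] at h
    exact h
  · rw [hnorm]
    have h4 : Lam < (1 + δ) * lam n₀ := by
      rw [div_lt_iff₀ h1δ] at hn₀
      linarith
    have h5 : C ≤ (1 + ε) * lam n₀ := by
      rw [hC_def]
      have h6 : (1 + δ) * Lam ≤ (1 + δ) * ((1 + δ) * lam n₀) :=
        mul_le_mul_of_nonneg_left h4.le h1δ.le
      have h7 : (1 + δ) * ((1 + δ) * lam n₀) ≤ (1 + ε) * lam n₀ := by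
        nlinarith [mul_nonneg (by linarith : (0:ℝ) ≤ ε - 3*δ) (hlam_pos n₀).le,
          mul_nonneg (mul_nonneg (by linarith : (0:ℝ) ≤ 1 - δ) hδ_pos.le) (hlam_pos n₀).le]
      linarith
    calc (lam n₀)⁻¹ * ‖T₀ v‖ ≤ (lam n₀)⁻¹ * (C * ‖v‖) :=
          mul_le_mul_of_nonneg_left (hT₀_bound v) hinv_pos.le
      _ = ((lam n₀)⁻¹ * C) * ‖v‖ := by ring
      _ ≤ ((lam n₀)⁻¹ * ((1 + ε) * lam n₀)) * ‖v‖ := by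
          refine mul_le_mul_of_nonneg_right (mul_le_mul_of_nonneg_left h5 hinv_pos.le)
            (norm_nonneg v)
      _ = (1 + ε) * ‖v‖ := by
          have h8 : (lam n₀)⁻¹ * ((1 + ε) * lam n₀) = 1 + ε := by
            field_simp [(hlam_pos n₀).ne']
          rw [h8]
end

section
/- Let T : ℓ¹ → X be a linear embedding with ‖x‖₁ ≤ ‖Tx‖ ≤ (1+ε)‖x‖₁ for all x, and let Y = T(ℓ¹). Define |y|_Y = inf{ ‖x‖₁ + ‖y − Tx‖ : x ∈ ℓ¹ } for y ∈ Y. Then |·|_Y is a norm on Y satisfying (1+ε)^{-1}‖y‖ ≤ |y|_Y ≤ ‖y‖ for all y ∈ Y, and T : ℓ¹ → (Y, |·|_Y) is an isometry. -/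
open Filter Topology

/-- If `T : ℓ¹ → X` satisfies `‖v‖₁ ≤ ‖T v‖ ≤ (1+ε)‖v‖₁`, then
`N y = inf { ‖v‖₁ + ‖y − T v‖ }` is a norm on `Y = T(ℓ¹)` with
`(1+ε)⁻¹‖y‖ ≤ N y ≤ ‖y‖`, and `T : ℓ¹ → (Y, N)` is an isometry. -/
theorem infimum_norm_on_l1_image
    {X : Type*} [NormedAddCommGroup X] [NormedSpace ℝ X]
    (ε : ℝ) (hε : ε ∈ Set.Ioo (0 : ℝ) 1)
    (T : lp (fun _ : ℕ => ℝ) 1 →L[ℝ] X)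
    (hT : ∀ v, ‖v‖ ≤ ‖T v‖ ∧ ‖T v‖ ≤ (1 + ε) * ‖v‖)
    (N : X → ℝ)
    (hN : ∀ y : X, N y = ⨅ v : lp (fun _ : ℕ => ℝ) 1, (‖v‖ + ‖y - T v‖)) :
    (∀ y z : X, y ∈ Set.range T → z ∈ Set.range T → N (y + z) ≤ N y + N z) ∧
    (∀ (c : ℝ) (y : X), y ∈ Set.range T → N (c • y) = |c| * N y) ∧
    (∀ y ∈ Set.range T, N y = 0 → y = 0) ∧
    (∀ y ∈ Set.range T, (1 + ε)⁻¹ * ‖y‖ ≤ N y ∧ N y ≤ ‖y‖) ∧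
    (∀ v, N (T v) = ‖v‖) := by
  have hε1 : (0 : ℝ) < 1 + ε := by linarith [hε.1]
  have key : ∀ u, N (T u) = ‖u‖ := by
    intro u
    rw [hN]
    apply le_antisymm
    · have := ciInf_le (f := fun v => ‖v‖ + ‖T u - T v‖)
        ⟨0, by rintro _ ⟨v, rfl⟩; positivity⟩ u
      simpa using this
    · apply le_ciInf
      intro v
      have h1 : ‖u - v‖ ≤ ‖T u - T v‖ := by
        have := (hT (u - v)).1
        rwa [map_sub] at this
      calc ‖u‖ = ‖v + (u - v)‖ := by rw [add_sub_cancel]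
        _ ≤ ‖v‖ + ‖u - v‖ := norm_add_le _ _
        _ ≤ ‖v‖ + ‖T u - T v‖ := by linarith
  refine ⟨?_, ?_, ?_, ?_, key⟩
  · rintro _ _ ⟨u, rfl⟩ ⟨v, rfl⟩
    rw [← map_add, key, key, key]
    exact norm_add_le _ _
  · rintro c _ ⟨u, rfl⟩
    rw [← map_smul, key, key, norm_smul, Real.norm_eq_abs]
  · rintro _ ⟨u, rfl⟩ h
    rw [key] at h
    rw [norm_eq_zero] at h
    rw [h, map_zero]
  · rintro _ ⟨u, rfl⟩
    rw [key]
    constructor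
    · rw [inv_mul_le_iff₀ hε1]
      exact (hT u).2
    · exact (hT u).1
end

section
/- Let X be a separable Banach space and let (f_n) ⊆ B_{X*} be a sequence of norm-at-most-one functionals with ‖x‖ = sup_n |f_n(x)| for all x ∈ X. For δ > 0, define |||x|||² = ‖x‖² + δ Σ_{n=1}^∞ 2^{-n} f_n(x)². Then |||·||| is a strictly convex norm on X satisfying ‖x‖ ≤ |||x||| ≤ √(1+δ) ‖x‖ for all x. -/
open Filter Topology

private lemma sq_le_sq_nonneg {a b : ℝ} (_ha : 0 ≤ a) (hb : 0 ≤ b) (h : a ^ 2 ≤ b ^ 2) :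
    a ≤ b := by nlinarith

private lemma sq_eq_sq_nonneg {a b : ℝ} (_ha : 0 ≤ a) (hb : 0 ≤ b) (h : a ^ 2 = b ^ 2) :
    a = b := by nlinarith

/-- If `(f_n)` are norm-at-most-one functionals on a separable space
with `‖x‖ = sup_n |f_n x|`, and `N x² = ‖x‖² + δ Σ 2^{-(n+1)} f_n(x)²`, then `N` is a
strictly convex norm with `‖x‖ ≤ N x ≤ √(1+δ)‖x‖`. -/
theorem strictly_convex_norm_from_functionals
    {X : Type*} [NormedAddCommGroup X] [NormedSpace ℝ X]
    [TopologicalSpace.SeparableSpace X]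
    (f : ℕ → X →L[ℝ] ℝ) (hf1 : ∀ n, ‖f n‖ ≤ 1)
    (hsup : ∀ x : X, ‖x‖ = ⨆ n, |f n x|)
    (δ : ℝ) (hδ : 0 < δ)
    (N : X → ℝ) (hNpos : ∀ x, 0 ≤ N x)
    (hN : ∀ x, N x ^ 2 = ‖x‖ ^ 2 + δ * ∑' n : ℕ, (2 : ℝ)⁻¹ ^ (n + 1) * (f n x) ^ 2) :
    (∀ x y, N (x + y) ≤ N x + N y) ∧
    (∀ (c : ℝ) (x : X), N (c • x) = |c| * N x) ∧
    (∀ x, N x = 0 → x = 0) ∧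
    (∀ u v : X, N u = 1 → N v = 1 → u ≠ v → N (u + v) < 2) ∧
    (∀ x, ‖x‖ ≤ N x ∧ N x ≤ Real.sqrt (1 + δ) * ‖x‖) := by
  set c : ℕ → ℝ := fun n => (2 : ℝ)⁻¹ ^ (n + 1) with hc
  have hcpos : ∀ n, 0 < c n := fun n => pow_pos (by norm_num) _
  have hδc : ∀ n, 0 < δ * c n := fun n => mul_pos hδ (hcpos n)
  have hcsum : Summable c := by
    simpa [hc, pow_succ] using
      ((summable_geometric_of_lt_one (by norm_num) (by norm_num : (2:ℝ)⁻¹ < 1)).mul_right 2⁻¹)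
  have hctsum : ∑' n, c n = 1 := by
    have h0 : ∑' n : ℕ, (2:ℝ)⁻¹ ^ n = 2 := by
      rw [tsum_geometric_of_lt_one (by norm_num) (by norm_num)]; norm_num
    calc ∑' n, c n = ∑' n : ℕ, (2:ℝ)⁻¹ ^ n * 2⁻¹ := by
          refine tsum_congr fun n => ?_; simp only [hc]; rw [pow_succ]
      _ = 2 * 2⁻¹ := by rw [tsum_mul_right, h0]
      _ = 1 := by norm_num
  have hN' : ∀ x, N x ^ 2 = ‖x‖ ^ 2 + δ * ∑' n : ℕ, c n * (f n x) ^ 2 := hN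
  have hfx : ∀ (x : X) n, (f n x) ^ 2 ≤ ‖x‖ ^ 2 := by
    intro x n
    have h1 : ‖f n x‖ ≤ 1 * ‖x‖ := (f n).le_of_opNorm_le (hf1 n) x
    rw [Real.norm_eq_abs, one_mul] at h1
    nlinarith [abs_nonneg (f n x), sq_abs (f n x)]
  have hsumx : ∀ x : X, Summable (fun n => c n * (f n x) ^ 2) := by
    intro x
    refine Summable.of_nonneg_of_le (fun n => by positivity)
      (fun n => ?_) (hcsum.mul_right (‖x‖ ^ 2))
    exact mul_le_mul_of_nonneg_left (hfx x n) (hcpos n).le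
  -- the embedding into ℓ²
  set F : X → ℕ → ℝ := fun x n => Real.sqrt (δ * c n) * f n x with hF
  have hFsq : ∀ (x : X) n, (F x n) ^ 2 = δ * (c n * (f n x) ^ 2) := by
    intro x n
    rw [hF]; rw [mul_pow, Real.sq_sqrt (hδc n).le]; ring
  have htwo : (0:ℝ) < (2 : ENNReal).toReal := by norm_num
  have hrp : ∀ t : ℝ, t ^ (2 : ENNReal).toReal = t ^ 2 := by
    intro t
    have : (2 : ENNReal).toReal = (2:ℝ) := by norm_num
    rw [this, Real.rpow_two]
  have hmem : ∀ x : X, Memℓp (F x) 2 := by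
    intro x
    apply memℓp_gen
    have : (fun n => ‖F x n‖ ^ (2 : ENNReal).toReal) = fun n => δ * (c n * (f n x) ^ 2) := by
      funext n; rw [hrp, Real.norm_eq_abs, sq_abs, hFsq]
    rw [this]
    exact (hsumx x).mul_left δ
  set g : X → lp (fun _ : ℕ => ℝ) 2 := fun x => ⟨F x, hmem x⟩ with hg
  have hgnorm : ∀ x : X, ‖g x‖ ^ 2 = δ * ∑' n, c n * (f n x) ^ 2 := by
    intro x
    have h1 := lp.norm_rpow_eq_tsum htwo (g x)
    rw [hrp] at h1
    rw [h1]
    rw [← tsum_mul_left]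
    refine tsum_congr fun n => ?_
    rw [hrp, Real.norm_eq_abs, sq_abs]
    exact hFsq x n
  have hgadd : ∀ x y : X, g (x + y) = g x + g y := by
    intro x y
    apply Subtype.ext
    funext n
    have : ((g x + g y : lp (fun _ : ℕ => ℝ) 2) : ∀ _ : ℕ, ℝ) n = F x n + F y n := rfl
    rw [hg]
    simp only [this]
    show F (x + y) n = F x n + F y n
    rw [hF]; simp only [map_add]; ring
  set A : X → WithLp 2 (ℝ × lp (fun _ : ℕ => ℝ) 2) :=
    fun x => (WithLp.equiv 2 _).symm (‖x‖, g x) with hA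
  have hAfst : ∀ x, (A x).fst = ‖x‖ := fun _ => rfl
  have hAsnd : ∀ x, (A x).snd = g x := fun _ => rfl
  have hAnormsq : ∀ x, ‖A x‖ ^ 2 = ‖x‖ ^ 2 + ‖g x‖ ^ 2 := by
    intro x
    rw [WithLp.prod_norm_sq_eq_of_L2, hAfst, hAsnd, Real.norm_eq_abs, sq_abs]
  have hAnorm : ∀ x, ‖A x‖ = N x := by
    intro x
    refine sq_eq_sq_nonneg (norm_nonneg _) (hNpos x) ?_
    rw [hAnormsq, hN', hgnorm]
  -- key triangle step
  have hkey : ∀ x y : X, N (x + y) ≤ ‖A x + A y‖ := by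
    intro x y
    refine sq_le_sq_nonneg (hNpos _) (norm_nonneg _) ?_
    have hsum : (A x + A y).fst = ‖x‖ + ‖y‖ := rfl
    have hsnd : (A x + A y).snd = g x + g y := rfl
    have h1 : ‖A x + A y‖ ^ 2 = (‖x‖ + ‖y‖) ^ 2 + ‖g x + g y‖ ^ 2 := by
      rw [WithLp.prod_norm_sq_eq_of_L2, hsum, hsnd, Real.norm_eq_abs,
        abs_of_nonneg (by positivity)]
    rw [h1, ← hAnorm, hAnormsq, hgadd]
    have h2 : ‖x + y‖ ^ 2 ≤ (‖x‖ + ‖y‖) ^ 2 := by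
      have := norm_add_le x y
      nlinarith [norm_nonneg (x + y)]
    linarith
  refine ⟨?_, ?_, ?_, ?_, ?_⟩
  · -- triangle
    intro x y
    calc N (x + y) ≤ ‖A x + A y‖ := hkey x y
      _ ≤ ‖A x‖ + ‖A y‖ := norm_add_le _ _
      _ = N x + N y := by rw [hAnorm, hAnorm]
  · -- homogeneity
    intro r x
    refine sq_eq_sq_nonneg (hNpos _) (mul_nonneg (abs_nonneg r) (hNpos x)) ?_
    have h1 : ∑' n, c n * (f n (r • x)) ^ 2 = r ^ 2 * ∑' n, c n * (f n x) ^ 2 := by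
      rw [← tsum_mul_left]
      refine tsum_congr fun n => ?_
      rw [map_smul, smul_eq_mul]; ring
    have h2 := hN' x
    rw [hN', h1, norm_smul, Real.norm_eq_abs, mul_pow, sq_abs, mul_pow, sq_abs, h2]
    ring
  · -- definite
    intro x hx
    have h1 := hN' x
    rw [hx] at h1
    have h2 : 0 ≤ δ * ∑' n, c n * (f n x) ^ 2 :=
      mul_nonneg hδ.le (tsum_nonneg fun n => by positivity)
    have h3 : ‖x‖ ^ 2 ≤ 0 := by nlinarith
    have : ‖x‖ = 0 := by nlinarith [norm_nonneg x]
    exact norm_eq_zero.mp this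
  · -- strict convexity
    intro u v hu hv huv
    have hAu : ‖A u‖ = 1 := by rw [hAnorm, hu]
    have hAv : ‖A v‖ = 1 := by rw [hAnorm, hv]
    have hle : ‖A u + A v‖ ≤ 2 := by
      have := norm_add_le (A u) (A v); rw [hAu, hAv] at this; linarith
    rcases lt_or_eq_of_le hle with h | h
    · exact lt_of_le_of_lt (hkey u v) h
    · exfalso
      have hinner : @inner ℝ _ _ (A u) (A v) = ‖A u‖ * ‖A v‖ := by
        have h1 := norm_add_sq_real (A u) (A v)
        rw [h, hAu, hAv] at h1
        rw [hAu, hAv]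
        nlinarith
      have hAeq : A u = A v := by
        have h2 := inner_eq_norm_mul_iff_real.mp hinner
        rw [hAu, hAv, one_smul, one_smul] at h2
        exact h2
      have hgeq : g u = g v := by
        have := congrArg (fun p : WithLp 2 (ℝ × lp (fun _ : ℕ => ℝ) 2) => p.snd) hAeq
        rwa [hAsnd, hAsnd] at this
      have hfn : ∀ n, f n u = f n v := by
        intro n
        have h3 : F u n = F v n := by
          have := congrArg (fun q : lp (fun _ : ℕ => ℝ) 2 => (q : ∀ _ : ℕ, ℝ) n) hgeq
          simpa [hg] using this
        rw [hF] at h3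
        exact mul_left_cancel₀ (by positivity : Real.sqrt (δ * c n) ≠ 0) h3
      apply huv
      have h4 : ‖u - v‖ = 0 := by
        rw [hsup (u - v)]
        have : ∀ n, |f n (u - v)| = 0 := by
          intro n; rw [map_sub, hfn n, sub_self, abs_zero]
        simp only [this]
        exact ciSup_const
      rw [← sub_eq_zero]
      exact norm_eq_zero.mp h4
  · -- bounds
    intro x
    constructor
    · refine sq_le_sq_nonneg (norm_nonneg x) (hNpos x) ?_
      rw [hN']
      have : 0 ≤ δ * ∑' n, c n * (f n x) ^ 2 :=
        mul_nonneg hδ.le (tsum_nonneg fun n => by positivity)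
      linarith
    · refine sq_le_sq_nonneg (hNpos x) (by positivity) ?_
      have h1 : ∑' n, c n * (f n x) ^ 2 ≤ ‖x‖ ^ 2 := by
        calc ∑' n, c n * (f n x) ^ 2 ≤ ∑' n, c n * ‖x‖ ^ 2 :=
              Summable.tsum_le_tsum (fun n => mul_le_mul_of_nonneg_left (hfx x n) (hcpos n).le)
                (hsumx x) (hcsum.mul_right _)
          _ = (∑' n, c n) * ‖x‖ ^ 2 := tsum_mul_right
          _ = ‖x‖ ^ 2 := by rw [hctsum, one_mul]
      rw [hN', mul_pow, Real.sq_sqrt (by linarith : (0:ℝ) ≤ 1 + δ)]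
      nlinarith
end

section
/- If K^s(X) < 2 for a Banach space X, then there exists ε > 0 such that for every equivalent norm |||·||| on X that is (1+ε)-equivalent to the original norm, the unit sphere of (X, |||·|||) contains no symmetrically 2-separated sequence; in particular, K^s((X, |||·|||)) < 2. -/
open Filter Topology

/-- The symmetric Kottman constant of `X` computed with respect to a norm
function `N`. -/
noncomputable def symKottmanWith {X : Type*} [AddGroup X] (N : X → ℝ) : ℝ :=
  sSup {σ : ℝ | 0 < σ ∧ ∃ x : ℕ → X, (∀ n, N (x n) ≤ 1) ∧
    ∀ n k, n ≠ k → σ ≤ N (x n + x k) ∧ σ ≤ N (x n - x k)}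

/-- If `K^s(X) < 2` then there is `ε > 0` such that every
`(1+ε)`-equivalent renorming of `X` has no symmetrically 2-separated sequence of unit
vectors; in particular its symmetric Kottman constant stays below `2`. -/
theorem symKottman_lt_two_stable_under_small_renorming
    {X : Type*} [NormedAddCommGroup X] [NormedSpace ℝ X] [CompleteSpace X]
    (h : symKottmanWith (fun x : X => ‖x‖) < 2) :
    ∃ ε > (0 : ℝ), ∀ N : Seminorm ℝ X,
      (∀ z : X, (1 + ε)⁻¹ * ‖z‖ ≤ N z ∧ N z ≤ (1 + ε) * ‖z‖) →
      (¬ ∃ u : ℕ → X, (∀ n, N (u n) = 1) ∧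
          ∀ n m, n ≠ m → 2 ≤ N (u n + u m) ∧ 2 ≤ N (u n - u m)) ∧
      symKottmanWith (fun x : X => N x) < 2 := by
  classical
  set S : Set ℝ := {σ : ℝ | 0 < σ ∧ ∃ x : ℕ → X, (∀ n, ‖x n‖ ≤ 1) ∧
    ∀ n k, n ≠ k → σ ≤ ‖x n + x k‖ ∧ σ ≤ ‖x n - x k‖} with hS
  have hKeq : symKottmanWith (fun x : X => ‖x‖) = sSup S := rfl
  set K : ℝ := sSup S with hKdef
  rw [hKeq] at h
  have hbdd : BddAbove S := by
    refine ⟨2, ?_⟩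
    rintro σ ⟨hσ, x, hx1, hsep⟩
    calc σ ≤ ‖x 0 + x 1‖ := (hsep 0 1 (by norm_num)).1
      _ ≤ ‖x 0‖ + ‖x 1‖ := norm_add_le _ _
      _ ≤ 2 := by linarith [hx1 0, hx1 1]
  have hK0 : 0 ≤ K := Real.sSup_nonneg (fun σ hσ => le_of_lt hσ.1)
  set K' : ℝ := max K 1 with hK'
  have hK'1 : 1 ≤ K' := le_max_right _ _
  have hK'pos : 0 < K' := lt_of_lt_of_le one_pos hK'1
  have hK'2 : K' < 2 := max_lt h one_lt_two
  set c : ℝ := (2 / K' + 1) / 2 with hc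
  have hc1 : 1 < c := by
    have h1 : 1 < 2 / K' := (one_lt_div hK'pos).2 hK'2
    rw [hc]; linarith
  have hcpos : 0 < c := by linarith
  have hK'c : K' * c = (2 + K') / 2 := by
    rw [hc]; field_simp
  have hKc : K * c < 2 := by
    have h1 : K ≤ K' := le_max_left _ _
    have h2 : K' * c < 2 := by rw [hK'c]; linarith
    nlinarith
  set s : ℝ := Real.sqrt c with hsdef
  have hs2 : s ^ 2 = c := Real.sq_sqrt (le_of_lt hcpos)
  have hs1 : 1 < s := by nlinarith [Real.sqrt_nonneg c]
  have hspos : 0 < s := by linarith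
  refine ⟨s - 1, by linarith, ?_⟩
  intro N hN
  have h1e : 1 + (s - 1) = s := by ring
  -- key scaling claim
  have key : ∀ σ : ℝ, 0 < σ →
      (∃ x : ℕ → X, (∀ n, (N : X → ℝ) (x n) ≤ 1) ∧
        ∀ n k, n ≠ k → σ ≤ N (x n + x k) ∧ σ ≤ N (x n - x k)) → σ ≤ c * K := by
    rintro σ hσ ⟨x, hx1, hsep⟩
    have hmem : σ / c ∈ S := by
      refine ⟨div_pos hσ hcpos, fun n => s⁻¹ • x n, ?_, ?_⟩
      · intro n
        have hxn : ‖x n‖ ≤ s := by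
          have := (hN (x n)).1
          rw [h1e] at this
          have h2 := hx1 n
          have hsinv : 0 < s⁻¹ := inv_pos.2 hspos
          calc ‖x n‖ = s * (s⁻¹ * ‖x n‖) := by field_simp
            _ ≤ s * 1 := by
                apply mul_le_mul_of_nonneg_left _ (le_of_lt hspos)
                exact le_trans this h2
            _ = s := mul_one s
        rw [norm_smul, Real.norm_eq_abs, abs_of_pos (inv_pos.2 hspos)]
        calc s⁻¹ * ‖x n‖ ≤ s⁻¹ * s :=
              mul_le_mul_of_nonneg_left hxn (le_of_lt (inv_pos.2 hspos))
          _ = 1 := inv_mul_cancel₀ (ne_of_gt hspos)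
      · intro n k hnk
        have hlow : ∀ z : X, (N : X → ℝ) z / s ≤ ‖z‖ := by
          intro z
          have := (hN z).2
          rw [h1e] at this
          rw [div_le_iff₀ hspos]
          linarith [this, mul_comm (‖z‖) s]
        have hadd : σ / c ≤ ‖s⁻¹ • x n + s⁻¹ • x k‖ := by
          rw [← smul_add, norm_smul, Real.norm_eq_abs, abs_of_pos (inv_pos.2 hspos)]
          have h3 := hlow (x n + x k)
          have h4 := (hsep n k hnk).1
          have : σ / s ≤ ‖x n + x k‖ := le_trans (by
            apply div_le_div_of_nonneg_right h4 hspos.le) h3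
          calc σ / c = s⁻¹ * (σ / s) := by
                rw [← hs2, pow_two, ← div_div, div_eq_mul_inv (σ / s) s, mul_comm]
            _ ≤ s⁻¹ * ‖x n + x k‖ :=
                mul_le_mul_of_nonneg_left this (le_of_lt (inv_pos.2 hspos))
        have hsub : σ / c ≤ ‖s⁻¹ • x n - s⁻¹ • x k‖ := by
          rw [← smul_sub, norm_smul, Real.norm_eq_abs, abs_of_pos (inv_pos.2 hspos)]
          have h3 := hlow (x n - x k)
          have h4 := (hsep n k hnk).2
          have : σ / s ≤ ‖x n - x k‖ := le_trans (by
            apply div_le_div_of_nonneg_right h4 hspos.le) h3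
          calc σ / c = s⁻¹ * (σ / s) := by
                rw [← hs2, pow_two, ← div_div, div_eq_mul_inv (σ / s) s, mul_comm]
            _ ≤ s⁻¹ * ‖x n - x k‖ :=
                mul_le_mul_of_nonneg_left this (le_of_lt (inv_pos.2 hspos))
        exact ⟨hadd, hsub⟩
    have hle : σ / c ≤ K := le_csSup hbdd hmem
    rw [div_le_iff₀ hcpos] at hle
    linarith [mul_comm K c]
  constructor
  · rintro ⟨u, hu1, husep⟩
    have h2 : (2 : ℝ) ≤ c * K := by
      refine key 2 (by norm_num) ⟨u, fun n => le_of_eq (hu1 n), husep⟩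
    linarith [mul_comm c K]
  · have : symKottmanWith (fun x : X => N x) ≤ c * K := by
      apply Real.sSup_le
      · rintro σ ⟨hσ, x, hx1, hsep⟩
        exact key σ hσ ⟨x, hx1, hsep⟩
      · positivity
    calc symKottmanWith (fun x : X => N x) ≤ c * K := this
      _ < 2 := by linarith [mul_comm c K]
end

section
/- Every basic sequence in a Banach space admits a block basis that is asymptotically monotone: there is a block basic sequence (z_n) whose partial-sum projections Q_n satisfy ‖Q_n‖ → 1. -/
open Filter Topology

section Aux
variable {X : Type*} [NormedAddCommGroup X] [NormedSpace ℝ X]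

lemma linind_of_basic (x : ℕ → X) (hnz : ∀ i, x i ≠ 0) (K : ℝ)
    (hbasic : ∀ k n, k ≤ n → ∀ a : ℕ → ℝ,
      ‖∑ i ∈ Finset.range k, a i • x i‖ ≤ K * ‖∑ i ∈ Finset.range n, a i • x i‖) :
    LinearIndependent ℝ x := by
  rw [linearIndependent_iff']
  intro s g hsum i hi
  set a : ℕ → ℝ := fun j => if j ∈ s then g j else 0 with ha
  set n : ℕ := s.sup id + 1 with hn
  have hsub : s ⊆ Finset.range n := by
    intro j hj
    exact Finset.mem_range.2 (Nat.lt_succ_of_le (Finset.le_sup (f := id) hj))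
  have hzero : ∑ j ∈ Finset.range n, a j • x j = 0 := by
    rw [← Finset.sum_subset hsub (fun j _ hjs => by simp [ha, hjs])]
    rw [← hsum]
    exact Finset.sum_congr rfl fun j hj => by simp [ha, hj]
  have hpart : ∀ k, k ≤ n → ∑ j ∈ Finset.range k, a j • x j = 0 := by
    intro k hk
    have := hbasic k n hk a
    rw [hzero, norm_zero, mul_zero] at this
    exact norm_le_zero_iff.1 this
  have hin : i < n := Finset.mem_range.1 (hsub hi)
  have h1 : ∑ j ∈ Finset.range (i+1), a j • x j = 0 := hpart (i+1) hin
  have h2 : ∑ j ∈ Finset.range i, a j • x j = 0 := hpart i (le_of_lt hin)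
  rw [Finset.sum_range_succ, h2, zero_add] at h1
  rcases smul_eq_zero.1 h1 with h | h
  · simpa [ha, hi] using h
  · exact absurd h (hnz i)

lemma key_step (x : ℕ → X) (hx : LinearIndependent ℝ x)
    (F : Submodule ℝ X) (fd : FiniteDimensional ℝ F)
    (δ : ℝ) (hδ0 : 0 < δ) (hδ1 : δ < 1) (N : ℕ) :
    ∃ (M : ℕ) (α : ℕ → ℝ), N ≤ M ∧ (∑ i ∈ Finset.Icc N M, α i • x i) ≠ 0 ∧
      ∀ y ∈ F, ∀ c : ℝ,
        (1 - δ) * ‖y‖ ≤ ‖y + c • (∑ i ∈ Finset.Icc N M, α i • x i)‖ := by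
  classical
  -- compact unit sphere of F
  have hcs : IsCompact ((Subtype.val : F → X) '' Metric.sphere (0 : F) 1) :=
    (isCompact_sphere (0 : F) 1).image continuous_subtype_val
  obtain ⟨t, hts, htf, htcover⟩ := hcs.finite_cover_balls hδ0
  set T : Finset X := htf.toFinset with hT
  have hTmem : ∀ c ∈ T, c ∈ F ∧ ‖c‖ = 1 := by
    intro c hc
    have : c ∈ (Subtype.val : F → X) '' Metric.sphere (0 : F) 1 := hts (htf.mem_toFinset.1 hc)
    obtain ⟨v, hv, rfl⟩ := this
    refine ⟨v.2, ?_⟩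
    simpa using hv
  have hTne : ∀ c ∈ T, c ≠ (0 : X) := fun c hc => by
    intro h; have := (hTmem c hc).2; rw [h] at this; simp at this
  -- dual functionals
  have hdual : ∀ c : T, ∃ g : X →L[ℝ] ℝ, ‖g‖ = 1 ∧ g c = ‖(c : X)‖ :=
    fun c => exists_dual_vector ℝ (c : X) (norm_ne_zero_iff.2 (hTne c c.2))
  choose f hf1 hf2 using hdual
  set p : ℕ := T.card with hp
  -- a vector in the common kernel, supported on x (N..N+p)
  set b : Fin (p+1) → X := fun j => x (N + j) with hb
  have hbind : LinearIndependent ℝ b := by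
    apply hx.comp
    intro j j' h
    exact Fin.ext (Nat.add_left_cancel h)
  set W : Submodule ℝ X := Submodule.span ℝ (Set.range b) with hW
  have fdW : FiniteDimensional ℝ W := FiniteDimensional.span_of_finite ℝ (Set.finite_range b)
  have hrW : Module.finrank ℝ W = p + 1 := by
    rw [hW, finrank_span_eq_card hbind, Fintype.card_fin]
  set Φ : W →ₗ[ℝ] (T → ℝ) :=
    LinearMap.pi (fun c => ((f c).toLinearMap).comp W.subtype) with hΦ
  have hker : LinearMap.ker Φ ≠ ⊥ := by
    intro h
    have hinj : Function.Injective Φ := LinearMap.ker_eq_bot.1 h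
    have := LinearMap.finrank_le_finrank_of_injective hinj
    rw [hrW, Module.finrank_pi, Fintype.card_coe] at this
    omega
  obtain ⟨w, hwker, hwne⟩ := Submodule.exists_mem_ne_zero_of_ne_bot hker
  have hwzero : ∀ c : T, f c w = 0 := by
    intro c
    have := LinearMap.mem_ker.1 hwker
    have := congrFun this c
    simpa [hΦ] using this
  -- representation of w as a combination
  obtain ⟨cfs, hcfs⟩ := (Submodule.mem_span_range_iff_exists_fun ℝ).1 (hW ▸ w.2 : (w:X) ∈ Submodule.span ℝ (Set.range b))
  set α : ℕ → ℝ := fun i => ∑ j : Fin (p+1), if i = N + j then cfs j else 0 with hα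
  have hrepr : ∑ i ∈ Finset.Icc N (N+p), α i • x i = (w : X) := by
    rw [← hcfs]
    simp only [hα, Finset.sum_smul, ite_smul, zero_smul]
    rw [Finset.sum_comm]
    refine Finset.sum_congr rfl fun j _ => ?_
    rw [Finset.sum_ite_eq' (Finset.Icc N (N+p)) (N + (j:ℕ)) (fun i => cfs j • x i)]
    have : N + (j : ℕ) ∈ Finset.Icc N (N + p) := by
      simp [Nat.le_add_right, Nat.add_le_add_left (Nat.le_of_lt_succ j.2)]
    simp [this, hb]
  refine ⟨N + p, α, Nat.le_add_right _ _, ?_, ?_⟩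
  · rw [hrepr]; exact fun h => hwne (Subtype.ext h)
  · intro y hy c
    rw [hrepr]
    rcases eq_or_ne y 0 with rfl | hy0
    · simp [norm_nonneg]
    -- reduce to the unit sphere
    have hyn : (0:ℝ) < ‖y‖ := norm_pos_iff.2 hy0
    set u : X := ‖y‖⁻¹ • y with hu
    have hun : ‖u‖ = 1 := norm_smul_inv_norm hy0
    have huF : u ∈ ((Subtype.val : F → X) '' Metric.sphere (0 : F) 1) := by
      refine ⟨⟨u, F.smul_mem _ hy⟩, ?_, rfl⟩
      simpa [Metric.mem_sphere] using hun
    obtain ⟨c₀, hc₀t, hc₀ball⟩ := Set.mem_iUnion₂.1 (htcover huF)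
    have hc₀T : c₀ ∈ T := htf.mem_toFinset.2 hc₀t
    have hdist : ‖u - c₀‖ < δ := by
      have := Metric.mem_ball.1 hc₀ball
      rwa [dist_eq_norm] at this
    have hkey : ∀ μ : ℝ, 1 - δ ≤ ‖u + μ • (w : X)‖ := by
      intro μ
      have h1 : f ⟨c₀, hc₀T⟩ (u + μ • (w:X)) ≤ ‖u + μ • (w:X)‖ := by
        calc f ⟨c₀, hc₀T⟩ (u + μ • (w:X)) ≤ |f ⟨c₀, hc₀T⟩ (u + μ • (w:X))| := le_abs_self _
        _ ≤ ‖f ⟨c₀, hc₀T⟩‖ * ‖u + μ • (w:X)‖ := (f _).le_opNorm _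
        _ = ‖u + μ • (w:X)‖ := by rw [hf1]; ring
      have h2 : 1 - δ ≤ f ⟨c₀, hc₀T⟩ (u + μ • (w:X)) := by
        have e1 : f ⟨c₀, hc₀T⟩ (u + μ • (w:X))
            = f ⟨c₀, hc₀T⟩ c₀ + f ⟨c₀, hc₀T⟩ (u - c₀) + μ * f ⟨c₀, hc₀T⟩ w := by
          simp only [map_add, map_smul, smul_eq_mul, map_sub]; ring
        rw [e1, hwzero ⟨c₀, hc₀T⟩, hf2, (hTmem c₀ hc₀T).2, mul_zero, add_zero]
        have : |f ⟨c₀, hc₀T⟩ (u - c₀)| ≤ ‖u - c₀‖ := by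
          calc |f ⟨c₀, hc₀T⟩ (u - c₀)| ≤ ‖f ⟨c₀, hc₀T⟩‖ * ‖u - c₀‖ := (f _).le_opNorm _
          _ = ‖u - c₀‖ := by rw [hf1]; ring
        have := neg_le_of_abs_le this
        nlinarith
      linarith
    have := hkey (c / ‖y‖)
    have hscale : ‖y + c • (w:X)‖ = ‖y‖ * ‖u + (c / ‖y‖) • (w:X)‖ := by
      rw [← norm_smul_of_nonneg (le_of_lt hyn)]
      congr 1
      rw [smul_add, hu, smul_smul, smul_smul]
      rw [mul_inv_cancel₀ (ne_of_gt hyn), one_smul]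
      congr 1
      field_simp
    rw [hscale]
    calc (1 - δ) * ‖y‖ = ‖y‖ * (1 - δ) := mul_comm _ _
      _ ≤ ‖y‖ * ‖u + (c / ‖y‖) • (w:X)‖ := mul_le_mul_of_nonneg_left this hyn.le
end Aux

section Aux2
variable {X : Type*} [NormedAddCommGroup X] [NormedSpace ℝ X]

/-- step tolerances -/
noncomputable def δb (m : ℕ) : ℝ := 1 - Real.exp (-(2⁻¹ : ℝ) ^ m)

lemma δb_pos (m : ℕ) : 0 < δb m := by
  have : Real.exp (-(2⁻¹ : ℝ) ^ m) < 1 := by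
    rw [Real.exp_lt_one_iff, neg_lt_zero]
    positivity
  simp only [δb]; linarith

lemma δb_lt_one (m : ℕ) : δb m < 1 := by
  have := Real.exp_pos (-(2⁻¹ : ℝ) ^ m)
  simp only [δb]; linarith

lemma one_sub_δb (m : ℕ) : 1 - δb m = Real.exp (-(2⁻¹ : ℝ) ^ m) := by simp [δb]

/-- state of the recursive construction -/
structure St (X : Type*) [NormedAddCommGroup X] [NormedSpace ℝ X] where
  N : ℕ
  E : Finset ℕ
  α : ℕ → ℝ
  F : Submodule ℝ X
  fd : FiniteDimensional ℝ F

variable (x : ℕ → X) (hx : LinearIndependent ℝ x)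

noncomputable def nextB (m : ℕ) (s : St X) : St X :=
  let h := key_step x hx s.F s.fd (δb m) (δb_pos m) (δb_lt_one m) s.N
  let M := h.choose
  let α := h.choose_spec.choose
  { N := M + 1
    E := Finset.Icc s.N M
    α := α
    F := s.F ⊔ Submodule.span ℝ {∑ i ∈ Finset.Icc s.N M, α i • x i}
    fd := by
      have := s.fd
      have := FiniteDimensional.span_of_finite ℝ
        (Set.finite_singleton (∑ i ∈ Finset.Icc s.N M, α i • x i))
      exact Submodule.finiteDimensional_sup _ _ }

lemma nextB_spec (m : ℕ) (s : St X) :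
    ∃ M : ℕ, s.N ≤ M ∧ (nextB x hx m s).N = M + 1 ∧
      (nextB x hx m s).E = Finset.Icc s.N M ∧
      (∑ i ∈ (nextB x hx m s).E, (nextB x hx m s).α i • x i) ≠ 0 ∧
      (∀ y ∈ s.F, ∀ c : ℝ,
        (1 - δb m) * ‖y‖ ≤ ‖y + c • ∑ i ∈ (nextB x hx m s).E, (nextB x hx m s).α i • x i‖) ∧
      (nextB x hx m s).F =
        s.F ⊔ Submodule.span ℝ
          {∑ i ∈ (nextB x hx m s).E, (nextB x hx m s).α i • x i} := by
  obtain ⟨hM, hne, hineq⟩ :=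
    (key_step x hx s.F s.fd (δb m) (δb_pos m) (δb_lt_one m) s.N).choose_spec.choose_spec
  exact ⟨(key_step x hx s.F s.fd (δb m) (δb_pos m) (δb_lt_one m) s.N).choose,
    hM, rfl, rfl, hne, hineq, rfl⟩

noncomputable def stSeq : ℕ → St X
  | 0 => ⟨0, ∅, 0, ⊥, inferInstance⟩
  | (m + 1) => nextB x hx m (stSeq m)

end Aux2
/-- Every basic sequence in a Banach space admits an asymptotically
monotone block basis: blocks `z_m = Σ_{i ∈ E m} α i • x i` over successive finite sets,
whose partial-sum projection constants `C k` tend to `1`. -/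
theorem basic_sequence_has_asymptotically_monotone_block_basis
    {X : Type*} [NormedAddCommGroup X] [NormedSpace ℝ X] [CompleteSpace X]
    (x : ℕ → X) (hnz : ∀ i, x i ≠ 0) (K : ℝ)
    (hbasic : ∀ k n, k ≤ n → ∀ a : ℕ → ℝ,
      ‖∑ i ∈ Finset.range k, a i • x i‖ ≤ K * ‖∑ i ∈ Finset.range n, a i • x i‖) :
    ∃ (E : ℕ → Finset ℕ) (α : ℕ → ℝ),
      (∀ m, (E m).Nonempty) ∧
      (∀ m, ∀ i ∈ E m, ∀ j ∈ E (m + 1), i < j) ∧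
      (∀ m, (∑ i ∈ E m, α i • x i) ≠ 0) ∧
      ∃ C : ℕ → ℝ,
        (∀ k n, k ≤ n → ∀ a : ℕ → ℝ,
          ‖∑ m ∈ Finset.range k, a m • (∑ i ∈ E m, α i • x i)‖ ≤
            C k * ‖∑ m ∈ Finset.range n, a m • (∑ i ∈ E m, α i • x i)‖) ∧
        Tendsto C atTop (𝓝 1) := by
  classical
  have hx : LinearIndependent ℝ x := linind_of_basic x hnz K hbasic
  set S : ℕ → St X := stSeq x hx with hS
  have hSsucc : ∀ m, S (m + 1) = nextB x hx m (S m) := fun m => rfl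
  have spec : ∀ m, ∃ M : ℕ, (S m).N ≤ M ∧ (S (m+1)).N = M + 1 ∧
      (S (m+1)).E = Finset.Icc (S m).N M ∧
      (∑ i ∈ (S (m+1)).E, (S (m+1)).α i • x i) ≠ 0 ∧
      (∀ y ∈ (S m).F, ∀ c : ℝ,
        (1 - δb m) * ‖y‖ ≤ ‖y + c • ∑ i ∈ (S (m+1)).E, (S (m+1)).α i • x i‖) ∧
      (S (m+1)).F = (S m).F ⊔ Submodule.span ℝ
        {∑ i ∈ (S (m+1)).E, (S (m+1)).α i • x i} := by
    intro m
    rw [hSsucc m]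
    exact nextB_spec x hx m (S m)
  choose M hMle hNsucc hE hzne hineq hFsucc using spec
  set E : ℕ → Finset ℕ := fun m => (S (m+1)).E with hEdef
  set zb : ℕ → X := fun m => ∑ i ∈ E m, (S (m+1)).α i • x i with hzb
  -- N is strictly monotone
  have hNmono : StrictMono (fun m => (S m).N) := by
    apply strictMono_nat_of_lt_succ
    intro m
    rw [hNsucc m]
    exact Nat.lt_succ_of_le (hMle m)
  have hE' : ∀ m, E m = Finset.Icc (S m).N (M m) := hE
  -- membership bounds
  have hEbound : ∀ m, ∀ i ∈ E m, (S m).N ≤ i ∧ i < (S (m+1)).N := by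
    intro m i hi
    rw [hE' m, Finset.mem_Icc] at hi
    exact ⟨hi.1, by rw [hNsucc m]; omega⟩
  -- disjointness of blocks
  have hdisj : ∀ {a b : ℕ} {i : ℕ}, i ∈ E a → i ∈ E b → a = b := by
    intro a b i hia hib
    by_contra hab
    rcases Nat.lt_or_ge a b with h | h
    · have h1 := (hEbound a i hia).2
      have h2 := (hEbound b i hib).1
      have : (S (a+1)).N ≤ (S b).N := hNmono.monotone (Nat.succ_le_of_lt h)
      omega
    · rcases Nat.lt_or_ge b a with h' | h'
      · have h1 := (hEbound b i hib).2
        have h2 := (hEbound a i hia).1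
        have : (S (b+1)).N ≤ (S a).N := hNmono.monotone (Nat.succ_le_of_lt h')
        omega
      · omega
  -- glued coefficients
  set αg : ℕ → ℝ := fun i =>
    if h : ∃ m, i ∈ E m then (S (Nat.find h + 1)).α i else 0 with hαg
  have hαg_eq : ∀ m, ∀ i ∈ E m, αg i = (S (m+1)).α i := by
    intro m i hi
    have h : ∃ m', i ∈ E m' := ⟨m, hi⟩
    have : Nat.find h = m := hdisj (Nat.find_spec h) hi
    simp only [hαg, dif_pos h, this]
  have hzf : ∀ m, (∑ i ∈ E m, αg i • x i) = zb m := by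
    intro m
    exact Finset.sum_congr rfl fun i hi => by rw [hαg_eq m i hi]
  -- previous blocks lie in the current subspace
  have hzmem : ∀ m, ∀ j < m, zb j ∈ (S m).F := by
    intro m
    induction m with
    | zero => intro j hj; omega
    | succ m ih =>
      intro j hj
      rw [hFsucc m]
      rcases Nat.lt_or_ge j m with h | h
      · exact Submodule.mem_sup_left (ih j h)
      · have : j = m := by omega
        subst this
        exact Submodule.mem_sup_right (Submodule.mem_span_singleton_self _)
  -- one-step estimate
  have hstep : ∀ (a : ℕ → ℝ) (n : ℕ),
      ‖∑ m ∈ Finset.range n, a m • zb m‖ ≤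
        Real.exp ((2⁻¹ : ℝ) ^ n) * ‖∑ m ∈ Finset.range (n+1), a m • zb m‖ := by
    intro a n
    set y : X := ∑ m ∈ Finset.range n, a m • zb m with hy
    have hyF : y ∈ (S n).F :=
      Submodule.sum_mem _ fun m hm =>
        Submodule.smul_mem _ _ (hzmem n m (Finset.mem_range.1 hm))
    have h1 := hineq n y hyF (a n)
    rw [one_sub_δb] at h1
    have h2 : ∑ m ∈ Finset.range (n+1), a m • zb m = y + a n • zb n := by
      rw [Finset.sum_range_succ]
    rw [h2]
    have hept := Real.exp_pos ((2⁻¹ : ℝ) ^ n)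
    have := mul_le_mul_of_nonneg_left h1 hept.le
    rw [← mul_assoc, ← Real.exp_add] at this
    simpa using this
  -- chained estimate
  have hchain : ∀ (a : ℕ → ℝ) (k n : ℕ), k ≤ n →
      ‖∑ m ∈ Finset.range k, a m • zb m‖ ≤
        Real.exp (∑ j ∈ Finset.Ico k n, (2⁻¹ : ℝ) ^ j) *
          ‖∑ m ∈ Finset.range n, a m • zb m‖ := by
    intro a k n hkn
    induction n, hkn using Nat.le_induction with
    | base => simp
    | succ n hkn ih =>
      calc ‖∑ m ∈ Finset.range k, a m • zb m‖
          ≤ Real.exp (∑ j ∈ Finset.Ico k n, (2⁻¹ : ℝ) ^ j) *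
            ‖∑ m ∈ Finset.range n, a m • zb m‖ := ih
        _ ≤ Real.exp (∑ j ∈ Finset.Ico k n, (2⁻¹ : ℝ) ^ j) *
            (Real.exp ((2⁻¹ : ℝ) ^ n) * ‖∑ m ∈ Finset.range (n+1), a m • zb m‖) :=
            mul_le_mul_of_nonneg_left (hstep a n) (Real.exp_pos _).le
        _ = Real.exp (∑ j ∈ Finset.Ico k (n+1), (2⁻¹ : ℝ) ^ j) *
            ‖∑ m ∈ Finset.range (n+1), a m • zb m‖ := by
            rw [Finset.sum_Ico_succ_top hkn, Real.exp_add, mul_assoc]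
  refine ⟨E, αg, ?_, ?_, ?_, fun k => Real.exp (2 * (2⁻¹ : ℝ) ^ k), ?_, ?_⟩
  · intro m
    show (E m).Nonempty
    rw [hE' m]
    exact Finset.nonempty_Icc.2 (hMle m)
  · intro m i hi j hj
    have h1 := (hEbound m i hi).2
    have h2 := (hEbound (m+1) j hj).1
    omega
  · intro m
    rw [hzf m]
    exact hzne m
  · intro k n hkn a
    simp only [hzf]
    refine (hchain a k n hkn).trans ?_
    apply mul_le_mul_of_nonneg_right _ (norm_nonneg _)
    rw [Real.exp_le_exp]
    have hsum : ∑ j ∈ Finset.Ico k n, (2⁻¹ : ℝ) ^ j ≤ 2 * (2⁻¹ : ℝ) ^ k := by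
      rw [geom_sum_Ico (by norm_num : (2⁻¹ : ℝ) ≠ 1) hkn]
      have h1 : (0:ℝ) ≤ (2⁻¹ : ℝ) ^ n := by positivity
      have h2 : ((2⁻¹:ℝ) ^ n - (2⁻¹:ℝ) ^ k) / ((2⁻¹:ℝ) - 1)
          = 2 * ((2⁻¹:ℝ) ^ k - (2⁻¹:ℝ) ^ n) := by ring
      rw [h2]; linarith
    exact hsum
  · have h1 : Tendsto (fun k : ℕ => (2⁻¹ : ℝ) ^ k) atTop (𝓝 0) :=
      tendsto_pow_atTop_nhds_zero_of_lt_one (by norm_num) (by norm_num)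
    have h2 : Tendsto (fun k : ℕ => 2 * (2⁻¹ : ℝ) ^ k) atTop (𝓝 (2 * 0)) :=
      h1.const_mul 2
    have h3 := (Real.continuous_exp.tendsto (2 * 0)).comp h2
    simpa [Function.comp_def] using h3
end

section
/- If a Banach space X admits, for a given ε ∈ (0,1), a (1+ε)-biorthogonal system, then X admits a (1+ε)²-equivalent renorming whose unit sphere contains an infinite symmetrically 2-separated set; consequently the symmetric Kottman constant of the renormed space equals 2. -/
open Filter Topology

/-- If `X` admits a `(1+ε)`-biorthogonal system (a biorthogonal
system `{x_n; f_n}` on a subspace `Y` with `‖x_n‖ ≤ 1+ε` and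
`|f_i y| + |f_j y| ≤ (1+ε)‖y‖` for `i ≠ j` on the closed span of the `x_n`), then `X`
admits a `(1+ε)²`-equivalent renorming whose unit sphere contains an infinite
symmetrically 2-separated set; consequently the symmetric Kottman constant of the
renormed space equals `2`. -/
theorem one_add_eps_biorthogonal_renorming_symKottman_two
    {X : Type*} [NormedAddCommGroup X] [NormedSpace ℝ X] [CompleteSpace X]
    (ε : ℝ) (hε : ε ∈ Set.Ioo (0 : ℝ) 1)
    (Y : Submodule ℝ X) (x : ℕ → Y) (f : ℕ → Y →L[ℝ] ℝ)
    (hbi : ∀ i j, f i (x j) = if i = j then 1 else 0)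
    (hx : ∀ n, ‖(x n : X)‖ ≤ 1 + ε)
    (hf : ∀ i j, i ≠ j →
      ∀ y ∈ closure ((Submodule.span ℝ (Set.range x) : Submodule ℝ Y) : Set Y),
        |f i y| + |f j y| ≤ (1 + ε) * ‖y‖) :
    ∃ N : Seminorm ℝ X,
      (∀ z : X, N z ≤ (1 + ε) ^ 2 * ‖z‖ ∧ ‖z‖ ≤ (1 + ε) ^ 2 * N z) ∧
      (∃ u : ℕ → X, Function.Injective u ∧ (∀ n, N (u n) = 1) ∧
        ∀ n m, n ≠ m → 2 ≤ N (u n + u m) ∧ 2 ≤ N (u n - u m)) ∧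
      symKottmanWith (fun z : X => N z) = 2 := by
  obtain ⟨hε0, hε1⟩ := hε
  have h1ε : (0:ℝ) < 1 + ε := by linarith
  set V : Submodule ℝ Y := Submodule.span ℝ (Set.range x) with hV
  set W : Submodule ℝ X := Submodule.span ℝ (Set.range fun n => (x n : X)) with hWdef
  set e : V →ₗ[ℝ] X := Y.subtype.comp V.subtype with he_def
  have he : Function.Injective e :=
    (Submodule.injective_subtype Y).comp (Submodule.injective_subtype V)
  have hrange : LinearMap.range e = W := by
    rw [he_def, LinearMap.range_comp, Submodule.range_subtype, hWdef, hV,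
      Submodule.map_span]
    congr 1
    rw [← Set.range_comp]
    rfl
  set φ : V ≃ₗ[ℝ] W := (LinearEquiv.ofInjective e he).trans (LinearEquiv.ofEq _ _ hrange)
    with hφdef
  have hφ : ∀ v : V, ((φ v : X)) = ((v : Y) : X) := by
    intro v
    simp [hφdef, he_def]
  have hxV : ∀ n, (x n) ∈ V := fun n => Submodule.subset_span ⟨n, rfl⟩
  -- key extension step
  have hkey : ∀ p : ℕ × ℕ × Bool, ∃ g : X →L[ℝ] ℝ, (∀ z, |g z| ≤ (1+ε) * ‖z‖) ∧
      ∀ n, g (x n : X) = if p.1 ≠ p.2.1 then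
        ((if p.1 = n then (1:ℝ) else 0) +
          (if p.2.2 then (1:ℝ) else -1) * (if p.2.1 = n then 1 else 0))
        else 0 := by
    rintro ⟨i, j, b⟩
    by_cases hij : i = j
    · refine ⟨0, fun z => by simpa using mul_nonneg h1ε.le (norm_nonneg z), ?_⟩
      intro n; simp [hij]
    · set c : Y →L[ℝ] ℝ := f i + (if b then (1:ℝ) else -1) • f j with hcdef
      have hcb : ∀ y : Y, y ∈ V → |c y| ≤ (1+ε) * ‖y‖ := by
        intro y hy
        have h1 := hf i j hij y (subset_closure hy)
        have h2 : |c y| ≤ |f i y| + |f j y| := by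
          rw [hcdef]
          simp only [ContinuousLinearMap.add_apply, ContinuousLinearMap.coe_smul',
            Pi.smul_apply, smul_eq_mul]
          refine le_trans (abs_add_le _ _) ?_
          cases b <;> simp [abs_mul]
        linarith
      set t0 : W →ₗ[ℝ] ℝ :=
        ((c : Y →ₗ[ℝ] ℝ).comp V.subtype).comp φ.symm.toLinearMap with ht0
      have ht0app : ∀ w : W, t0 w = c ((φ.symm w : V) : Y) := fun w => rfl
      have hcoe : ∀ w : W, (((φ.symm w : V) : Y) : X) = (w : X) := by
        intro w
        have h := hφ (φ.symm w)
        rw [φ.apply_symm_apply] at h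
        exact h.symm
      have ht0bd : ∀ w : W, ‖t0 w‖ ≤ (1+ε) * ‖w‖ := by
        intro w
        rw [ht0app, Real.norm_eq_abs]
        have h1 := hcb _ (φ.symm w).2
        have h2 : ‖((φ.symm w : V) : Y)‖ = ‖w‖ := by
          have h3 : ‖((φ.symm w : V) : Y)‖ = ‖(((φ.symm w : V) : Y) : X)‖ := rfl
          rw [h3, hcoe]
          rfl
        rwa [h2] at h1
      set t : W →L[ℝ] ℝ := t0.mkContinuous (1+ε) ht0bd with ht
      obtain ⟨g, hg, hgnorm⟩ := exists_extension_norm_eq W t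
      refine ⟨g, ?_, ?_⟩
      · intro z
        have h1 : |g z| ≤ ‖g‖ * ‖z‖ := by
          simpa [Real.norm_eq_abs] using g.le_opNorm z
        have h2 : ‖t‖ ≤ 1 + ε := t0.mkContinuous_norm_le h1ε.le ht0bd
        rw [hgnorm] at h1
        exact h1.trans (mul_le_mul_of_nonneg_right h2 (norm_nonneg z))
      · intro n
        have hmem : (x n : X) ∈ W := by
          rw [← hrange]; exact ⟨⟨x n, hxV n⟩, rfl⟩
        have step : g (x n : X) = t ⟨(x n : X), hmem⟩ := hg ⟨(x n : X), hmem⟩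
        have step2 : t ⟨(x n : X), hmem⟩ = c ((φ.symm ⟨(x n : X), hmem⟩ : V) : Y) := rfl
        have step3 : ((φ.symm ⟨(x n : X), hmem⟩ : V) : Y) = x n := by
          have h4 := hcoe ⟨(x n : X), hmem⟩
          exact Subtype.coe_injective h4
        rw [step, step2, step3, if_pos hij]
        rw [hcdef]
        simp only [ContinuousLinearMap.add_apply, ContinuousLinearMap.coe_smul',
          Pi.smul_apply, smul_eq_mul, hbi]
  choose G hGbd hGval using hkey
  -- the new norm
  have hbdd : ∀ z : X, BddAbove (Set.range fun p => |G p z|) := by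
    intro z
    exact ⟨(1+ε) * ‖z‖, by rintro _ ⟨p, rfl⟩; exact hGbd p z⟩
  set Nf : X → ℝ := fun z => max (‖z‖ * (1+ε)⁻¹) (⨆ p, |G p z|) with hNf
  have hsuple : ∀ z : X, (⨆ p, |G p z|) ≤ (1+ε) * ‖z‖ := fun z => ciSup_le fun p => hGbd p z
  have hNadd : ∀ y z : X, Nf (y + z) ≤ Nf y + Nf z := by
    intro y z
    refine max_le ?_ ?_
    · calc ‖y + z‖ * (1+ε)⁻¹ ≤ (‖y‖ + ‖z‖) * (1+ε)⁻¹ :=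
            mul_le_mul_of_nonneg_right (norm_add_le y z) (by positivity)
      _ = ‖y‖ * (1+ε)⁻¹ + ‖z‖ * (1+ε)⁻¹ := by ring
      _ ≤ Nf y + Nf z := add_le_add (le_max_left _ _) (le_max_left _ _)
    · refine ciSup_le fun p => ?_
      have h1 : |G p (y + z)| ≤ |G p y| + |G p z| := by
        rw [map_add]; exact abs_add_le _ _
      refine h1.trans (add_le_add ?_ ?_)
      · exact (le_ciSup (hbdd y) p).trans (le_max_right _ _)
      · exact (le_ciSup (hbdd z) p).trans (le_max_right _ _)
  have hNsmul : ∀ (a : ℝ) (z : X), Nf (a • z) = ‖a‖ * Nf z := by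
    intro a z
    simp only [hNf, norm_smul]
    have h1 : (⨆ p, |G p (a • z)|) = ‖a‖ * ⨆ p, |G p z| := by
      rw [Real.mul_iSup_of_nonneg (norm_nonneg a)]
      congr 1; funext p
      rw [map_smul]
      simp [abs_mul, Real.norm_eq_abs, smul_eq_mul]
    rw [h1, mul_max_of_nonneg _ _ (norm_nonneg a), mul_assoc]
  set N : Seminorm ℝ X := Seminorm.of Nf hNadd hNsmul with hN
  have hNapp : ∀ z, N z = Nf z := fun z => rfl
  have hinv1 : (1+ε)⁻¹ ≤ 1 := by
    rw [inv_le_one_iff₀]; right; linarith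
  have hc : (1+ε) * (1+ε)⁻¹ = 1 := mul_inv_cancel₀ (ne_of_gt h1ε)
  -- equivalence of norms
  have hequiv : ∀ z : X, N z ≤ (1 + ε) ^ 2 * ‖z‖ ∧ ‖z‖ ≤ (1 + ε) ^ 2 * N z := by
    intro z
    constructor
    · rw [hNapp]
      refine max_le ?_ ?_
      · nlinarith [mul_le_mul_of_nonneg_left hinv1 (norm_nonneg z), norm_nonneg z,
          mul_nonneg (norm_nonneg z) hε0.le, mul_nonneg (mul_nonneg (norm_nonneg z) hε0.le) hε0.le]
      · nlinarith [hsuple z, norm_nonneg z, mul_nonneg (mul_nonneg hε0.le h1ε.le) (norm_nonneg z)]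
    · have hm : ‖z‖ * (1+ε)⁻¹ ≤ N z := le_max_left _ _
      have h5 : (1+ε)^2 * (‖z‖ * (1+ε)⁻¹) ≤ (1+ε)^2 * N z :=
        mul_le_mul_of_nonneg_left hm (by positivity)
      have h6 : (1+ε)^2 * (‖z‖ * (1+ε)⁻¹) = (1+ε) * ‖z‖ := by
        field_simp
      rw [h6] at h5
      nlinarith [norm_nonneg z]
  -- the unit vectors
  set u : ℕ → X := fun n => (x n : X) with hu
  have hval : ∀ (p : ℕ × ℕ × Bool) (n : ℕ), p.1 ≠ p.2.1 →
      G p (u n) = (if p.1 = n then (1:ℝ) else 0) +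
        (if p.2.2 then (1:ℝ) else -1) * (if p.2.1 = n then 1 else 0) := by
    intro p n hp
    rw [hu]
    rw [hGval p n, if_pos hp]
  have habs_le : ∀ (p : ℕ × ℕ × Bool) (n : ℕ), |G p (u n)| ≤ 1 := by
    intro p n
    rcases eq_or_ne p.1 p.2.1 with hp | hp
    · have h := hGval p n
      rw [if_neg (by simpa using hp)] at h
      rw [hu]
      rw [h]; norm_num
    · rw [hval p n hp]
      rcases p with ⟨i, j, b⟩
      simp only at hp ⊢
      by_cases hi : i = n
      · have hj : j ≠ n := fun h => hp (hi.trans h.symm)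
        cases b <;> simp [hi, hj]
      · by_cases hj : j = n <;> cases b <;> simp [hi, hj]
  have hsup_eq : ∀ n, (⨆ p, |G p (u n)|) = 1 := by
    intro n
    refine le_antisymm (ciSup_le fun p => habs_le p n) ?_
    have h1 : G ((n, n+1, true) : ℕ × ℕ × Bool) (u n) = 1 := by
      rw [hval _ n (by simp)]
      simp
    have h2 := le_ciSup (hbdd (u n)) ((n, n+1, true) : ℕ × ℕ × Bool)
    rw [h1] at h2
    simpa using h2
  have hN1 : ∀ n, N (u n) = 1 := by
    intro n
    rw [hNapp]
    show max (‖u n‖ * (1+ε)⁻¹) (⨆ p, |G p (u n)|) = 1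
    rw [hsup_eq n]
    refine max_eq_right ?_
    calc ‖u n‖ * (1+ε)⁻¹ ≤ (1+ε) * (1+ε)⁻¹ :=
          mul_le_mul_of_nonneg_right (hx n) (by positivity)
    _ = 1 := hc
  have hsep : ∀ n m, n ≠ m → 2 ≤ N (u n + u m) ∧ 2 ≤ N (u n - u m) := by
    intro n m hnm
    have hmn : m ≠ n := hnm.symm
    constructor
    · have h1 : G ((n, m, true) : ℕ × ℕ × Bool) (u n + u m) = 2 := by
        rw [map_add, hval _ n hnm, hval _ m hnm]
        simp [hnm, hmn]
        norm_num
      have h2 := le_ciSup (hbdd (u n + u m)) ((n, m, true) : ℕ × ℕ × Bool)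
      rw [h1] at h2
      refine le_trans (by norm_num) (h2.trans ?_)
      exact (le_max_right _ _)
    · have h1 : G ((n, m, false) : ℕ × ℕ × Bool) (u n - u m) = 2 := by
        rw [map_sub, hval _ n hnm, hval _ m hnm]
        simp [hnm, hmn]
        norm_num
      have h2 := le_ciSup (hbdd (u n - u m)) ((n, m, false) : ℕ × ℕ × Bool)
      rw [h1] at h2
      refine le_trans (by norm_num) (h2.trans ?_)
      exact (le_max_right _ _)
  have hinj : Function.Injective u := by
    intro a b hab
    by_contra hne
    have h1 := (hsep a b hne).2
    rw [hab, sub_self, map_zero] at h1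
    norm_num at h1
  refine ⟨N, hequiv, ⟨u, hinj, hN1, hsep⟩, ?_⟩
  -- the symmetric Kottman constant
  have hmem : (2:ℝ) ∈ {σ : ℝ | 0 < σ ∧ ∃ z : ℕ → X, (∀ n, N (z n) ≤ 1) ∧
      ∀ n k, n ≠ k → σ ≤ N (z n + z k) ∧ σ ≤ N (z n - z k)} :=
    ⟨two_pos, u, fun n => le_of_eq (hN1 n), fun n k h => hsep n k h⟩
  have hub : ∀ σ ∈ {σ : ℝ | 0 < σ ∧ ∃ z : ℕ → X, (∀ n, N (z n) ≤ 1) ∧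
      ∀ n k, n ≠ k → σ ≤ N (z n + z k) ∧ σ ≤ N (z n - z k)}, σ ≤ 2 := by
    rintro σ ⟨hσ, z, hz1, hz2⟩
    have h1 := (hz2 0 1 (by norm_num)).1
    have h2 : N (z 0 + z 1) ≤ N (z 0) + N (z 1) := map_add_le_add N _ _
    have h3 := hz1 0
    have h4 := hz1 1
    linarith
  unfold symKottmanWith
  exact le_antisymm (csSup_le ⟨2, hmem⟩ hub) (le_csSup ⟨2, hub⟩ hmem)
end
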